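/- arXiv:1702.00765 — 6 statements merged into one kernel-verified Lean document; each statement's English description precedes it below -/
import Mathlib

section
/- For every w in the unit circle 𝕋 and every φ̂ ∈ 𝓜(λ), the function φ̂_w belongs to 𝓜(λ), ‖φ̂_w‖ = ‖φ̂‖, and M_{φ̂_w} f = (M_{φ̂} f_{w̄})_w for every f ∈ ℓ²(V) (where w̄ denotes the complex conjugate of w). -/
open Filter Finset Classical

set_option linter.unusedVariables false
open scoped ComplexConjugate ENNReal

noncomputable section
attribute [local instance] Classical.propDecidable

/-- A countably infinite rooted directed tree, encoded by the parent function
(with the convention `par root = root`) and the depth function `|·|`. -/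
structure DirTree (V : Type*) where
  root : V
  par : V → V
  depth : V → ℕ
  par_root : par root = root
  depth_eq_zero : ∀ v, depth v = 0 ↔ v = root
  depth_par : ∀ v, v ≠ root → depth (par v) + 1 = depth v

variable {V : Type*}

/-- The tree is leafless: every vertex has a child. -/
def DirTree.Leafless (T : DirTree V) : Prop :=
  ∀ u : V, ∃ v : V, v ≠ T.root ∧ T.par v = u

/-- `wProd T lam v k = λ_{par^k(v)|v}`, the product of the weights along `k` steps up from `v`. -/
def wProd (T : DirTree V) (lam : V → ℂ) (v : V) (k : ℕ) : ℂ :=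
  ∏ n ∈ Finset.range k, lam (T.par^[n] v)

/-- `(Γ_φ f)(v) = ∑_{k=0}^{|v|} λ_{par^k(v)|v} φ(k) f(par^k(v))`. -/
def Gamma (T : DirTree V) (lam : V → ℂ) (φ : ℕ → ℂ) (f : V → ℂ) (v : V) : ℂ :=
  ∑ k ∈ Finset.range (T.depth v + 1), wProd T lam v k * φ k * f (T.par^[k] v)

/-- `S` is the weighted shift `S_λ` on `ℓ²(V)`. -/
def IsShift (T : DirTree V) (lam : V → ℝ)
    (S : lp (fun _ : V => ℂ) 2 →L[ℂ] lp (fun _ : V => ℂ) 2) : Prop :=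
  ∀ f : lp (fun _ : V => ℂ) 2, ∀ v : V,
    S f v = if v = T.root then 0 else (lam v : ℂ) * f (T.par v)

/-- `M` is the (bounded, everywhere defined) multiplication operator `M_φ` with symbol `φ`;
the existence of such an `M` is equivalent to `φ ∈ 𝓜(λ)`. -/
def IsMultOp (T : DirTree V) (lam : V → ℝ) (φ : ℕ → ℂ)
    (M : lp (fun _ : V => ℂ) 2 →L[ℂ] lp (fun _ : V => ℂ) 2) : Prop :=
  ∀ f : lp (fun _ : V => ℂ) 2, ∀ v : V,
    M f v = Gamma T (fun u => (lam u : ℂ)) φ (⇑f) v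


lemma depth_iterate (T : DirTree V) (v : V) :
    ∀ k : ℕ, k ≤ T.depth v → T.depth (T.par^[k] v) + k = T.depth v := by
  intro k
  induction k with
  | zero => simp
  | succ k ih =>
    intro hk
    have hk' : k ≤ T.depth v := Nat.le_of_succ_le hk
    have h1 := ih hk'
    have hne : T.par^[k] v ≠ T.root := by
      intro h
      rw [h, (T.depth_eq_zero T.root).2 rfl] at h1
      omega
    have h2 := T.depth_par _ hne
    rw [Function.iterate_succ_apply']
    omega

lemma norm_pow_depth_mul (T : DirTree V) {c : ℂ} (hc : ‖c‖ = 1) (f : V → ℂ) (v : V) :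
    ‖c ^ T.depth v * f v‖ = ‖f v‖ := by
  rw [norm_mul, norm_pow, hc, one_pow, one_mul]

lemma mem_mulDepth (T : DirTree V) {c : ℂ} (hc : ‖c‖ = 1) (f : lp (fun _ : V => ℂ) 2) :
    Memℓp (fun v => c ^ T.depth v * f v) 2 := by
  have hp : (0:ℝ) < (2:ℝ≥0∞).toReal := by norm_num
  apply memℓp_gen
  have := ((memℓp_gen_iff hp).1 (lp.memℓp f))
  refine this.congr fun v => ?_
  rw [norm_pow_depth_mul T hc]

/-- Multiplication by `c ^ depth` as a linear isometry on `ℓ²`. -/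
def Umap (T : DirTree V) {c : ℂ} (hc : ‖c‖ = 1) :
    lp (fun _ : V => ℂ) 2 →ₗᵢ[ℂ] lp (fun _ : V => ℂ) 2 where
  toFun f := ⟨fun v => c ^ T.depth v * f v, mem_mulDepth T hc f⟩
  map_add' f g := by
    apply Subtype.ext
    funext v
    show c ^ T.depth v * (f v + g v) = c ^ T.depth v * f v + c ^ T.depth v * g v
    ring
  map_smul' a f := by
    apply Subtype.ext
    funext v
    show c ^ T.depth v * (a * f v) = a * (c ^ T.depth v * f v)
    ring
  norm_map' f := by
    have hp : (0:ℝ) < (2:ℝ≥0∞).toReal := by norm_num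
    rw [lp.norm_eq_tsum_rpow hp, lp.norm_eq_tsum_rpow hp]
    congr 1
    apply tsum_congr
    intro v
    show ‖c ^ T.depth v * f v‖ ^ (2:ℝ≥0∞).toReal = ‖f v‖ ^ (2:ℝ≥0∞).toReal
    rw [norm_pow_depth_mul T hc]

@[simp] lemma Umap_apply (T : DirTree V) {c : ℂ} (hc : ‖c‖ = 1)
    (f : lp (fun _ : V => ℂ) 2) (v : V) :
    (Umap T hc f) v = c ^ T.depth v * f v := rfl


/-- Lemma (ii): for `w ∈ 𝕋` and `φ ∈ 𝓜(λ)`, the symbol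
`φ_w(n) = wⁿφ(n)` belongs to `𝓜(λ)`, `‖M_{φ_w}‖ = ‖M_φ‖`, and
`M_{φ_w} f = (M_φ f_{w̄})_w` for every `f ∈ ℓ²(V)`. -/
theorem stmt0 [Countable V] [Infinite V] (T : DirTree V) (hTl : T.Leafless)
    (lam : V → ℝ) (hlam : ∀ v, v ≠ T.root → 0 < lam v)
    (S : lp (fun _ : V => ℂ) 2 →L[ℂ] lp (fun _ : V => ℂ) 2) (hS : IsShift T lam S)
    (w : ℂ) (hw : ‖w‖ = 1) (φ : ℕ → ℂ)
    (M : lp (fun _ : V => ℂ) 2 →L[ℂ] lp (fun _ : V => ℂ) 2) (hM : IsMultOp T lam φ M) :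
    ∃ Mw : lp (fun _ : V => ℂ) 2 →L[ℂ] lp (fun _ : V => ℂ) 2,
      IsMultOp T lam (fun n => w ^ n * φ n) Mw ∧ ‖Mw‖ = ‖M‖ ∧
      ∀ f : lp (fun _ : V => ℂ) 2,
        ∀ hf : Memℓp (fun v => (starRingEnd ℂ w) ^ (T.depth v) * f v) 2,
          ∀ v : V, Mw f v = w ^ (T.depth v) * (M (⟨fun u => (starRingEnd ℂ w) ^ (T.depth u) * f u, hf⟩ : lp (fun _ : V => ℂ) 2)) v := by
  have hwc : ‖(starRingEnd ℂ w)‖ = 1 := by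
    rw [RCLike.norm_conj]; exact hw
  have h1 : w * (starRingEnd ℂ w) = 1 := by
    rw [Complex.mul_conj]
    norm_cast
    rw [Complex.normSq_eq_norm_sq, hw]; norm_num
  set U := Umap T hw with hU
  set Uc := Umap T hwc with hUc
  refine ⟨U.toContinuousLinearMap ∘L M ∘L Uc.toContinuousLinearMap, ?_, ?_, ?_⟩
  · intro f v
    have : (U.toContinuousLinearMap ∘L M ∘L Uc.toContinuousLinearMap) f v
        = w ^ T.depth v * (M (Uc f)) v := rfl
    rw [this, hM (Uc f) v]
    unfold Gamma
    rw [Finset.mul_sum]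
    apply Finset.sum_congr rfl
    intro k hk
    have hkle : k ≤ T.depth v := Nat.lt_succ_iff.1 (Finset.mem_range.1 hk)
    have hd := depth_iterate T v k hkle
    have hcoe : (Uc f : V → ℂ) (T.par^[k] v)
        = (starRingEnd ℂ w) ^ T.depth (T.par^[k] v) * f (T.par^[k] v) := rfl
    rw [hcoe]
    have hpow : w ^ T.depth v * (starRingEnd ℂ w) ^ T.depth (T.par^[k] v) = w ^ k := by
      have : w ^ T.depth v = w ^ T.depth (T.par^[k] v) * w ^ k := by
        rw [← pow_add, hd]
      rw [this, mul_comm (w ^ T.depth (T.par^[k] v)) (w ^ k), mul_assoc, ← mul_pow, h1,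
        one_pow, mul_one]
    calc w ^ T.depth v * (wProd T (fun u => (lam u : ℂ)) v k * φ k *
          ((starRingEnd ℂ w) ^ T.depth (T.par^[k] v) * f (T.par^[k] v)))
        = (w ^ T.depth v * (starRingEnd ℂ w) ^ T.depth (T.par^[k] v)) *
          (wProd T (fun u => (lam u : ℂ)) v k * φ k * f (T.par^[k] v)) := by ring
      _ = wProd T (fun u => (lam u : ℂ)) v k * (w ^ k * φ k) * f (T.par^[k] v) := by
          rw [hpow]; ring
  · apply le_antisymm
    · apply ContinuousLinearMap.opNorm_le_bound _ (norm_nonneg M)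
      intro f
      have : (U.toContinuousLinearMap ∘L M ∘L Uc.toContinuousLinearMap) f
          = U (M (Uc f)) := rfl
      rw [this, U.norm_map]
      calc ‖M (Uc f)‖ ≤ ‖M‖ * ‖Uc f‖ := M.le_opNorm _
        _ = ‖M‖ * ‖f‖ := by rw [Uc.norm_map]
    · apply ContinuousLinearMap.opNorm_le_bound _ (norm_nonneg _)
      intro f
      have hid : Uc (U f) = f := by
        apply Subtype.ext
        funext v
        have : (Uc (U f) : V → ℂ) v
            = (starRingEnd ℂ w) ^ T.depth v * (w ^ T.depth v * f v) := rfl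
        rw [this, ← mul_assoc, ← mul_pow, mul_comm (starRingEnd ℂ w) w, h1, one_pow, one_mul]
      have hid2 : U (Uc (M (Uc (U f)))) = M f := by
        rw [hid]
        apply Subtype.ext
        funext v
        have : (U (Uc (M f)) : V → ℂ) v
            = w ^ T.depth v * ((starRingEnd ℂ w) ^ T.depth v * (M f) v) := rfl
        rw [this, ← mul_assoc, ← mul_pow, h1, one_pow, one_mul]
      calc ‖M f‖ = ‖U (Uc (M (Uc (U f))))‖ := by rw [hid2]
        _ = ‖M (Uc (U f))‖ := by rw [U.norm_map, Uc.norm_map]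
        _ = ‖U (M (Uc (U f)))‖ := (U.norm_map _).symm
        _ ≤ ‖U.toContinuousLinearMap ∘L M ∘L Uc.toContinuousLinearMap‖ * ‖U f‖ := by
            exact ContinuousLinearMap.le_opNorm
              (U.toContinuousLinearMap ∘L M ∘L Uc.toContinuousLinearMap) (U f)
        _ = ‖U.toContinuousLinearMap ∘L M ∘L Uc.toContinuousLinearMap‖ * ‖f‖ := by
            rw [U.norm_map]
  · intro f hf v
    have heq : (⟨fun u => (starRingEnd ℂ w) ^ (T.depth u) * f u, hf⟩ :
        lp (fun _ : V => ℂ) 2) = Uc f := Subtype.ext rfl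
    rw [heq]
    rfl
end
end

section
/- Let φ̂ ∈ 𝓜(λ) and let {p_n}_{n=1}^∞ be trigonometric polynomials such that (a) α := sup{|p̂_n(k)| : n ∈ ℕ, k ∈ ℕ₀} < ∞, (b) lim_{n→∞} p̂_n(k) = 1 for every k ∈ ℕ₀, and (c) β := sup_n ∫_𝕋 |p_n(w)| dw < ∞ (normalized Lebesgue measure). Then: (i) p̂_n·φ̂ ∈ 𝓜(λ) for every n; (ii) ‖M_{p̂_n·φ̂}‖ ≤ β·‖M_φ̂‖ for every n; and (iii) M_{p̂_n·φ̂} → M_φ̂ in the strong operator topology as n → ∞. -/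
open Filter Finset Classical

set_option linter.unusedVariables false
open scoped ComplexConjugate ENNReal

noncomputable section
attribute [local instance] Classical.propDecidable

variable {V : Type*}

set_option synthInstance.maxHeartbeats 1000000
set_option maxHeartbeats 1000000

namespace Stmt3

local notation "H" => lp (fun _ : V => ℂ) 2

lemma htwo : (0:ℝ) < (2 : ℝ≥0∞).toReal := by norm_num

lemma depth_iter (T : DirTree V) {v : V} : ∀ {k : ℕ}, k ≤ T.depth v →
    T.depth (T.par^[k] v) = T.depth v - k := by
  intro k
  induction k with
  | zero => simp
  | succ k ih =>
    intro hk
    have hk' : k ≤ T.depth v := by omega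
    have h1 := ih hk'
    have hne : T.par^[k] v ≠ T.root := by
      intro h
      have := (T.depth_eq_zero (T.par^[k] v)).2 h
      omega
    have h2 := T.depth_par _ hne
    rw [Function.iterate_succ_apply']
    omega

lemma iter_unique (T : DirTree V) {v u : V} {k k' : ℕ} (hk : k ≤ T.depth v)
    (hk' : k' ≤ T.depth v) (h1 : T.par^[k] v = u) (h2 : T.par^[k'] v = u) : k = k' := by
  have e1 := depth_iter T hk
  have e2 := depth_iter T hk'
  rw [h1] at e1; rw [h2] at e2
  omega

lemma memℓp_dmul {w : V → ℂ} (hw : ∀ v, ‖w v‖ = 1) (f : H) :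
    Memℓp (fun v => w v * f v) 2 := by
  have hf := lp.memℓp f
  rw [memℓp_gen_iff htwo] at hf ⊢
  refine hf.congr fun v => ?_
  rw [norm_mul, hw, one_mul]

def dmul {w : V → ℂ} (hw : ∀ v, ‖w v‖ = 1) : H →ₗᵢ[ℂ] H where
  toFun f := ⟨fun v => w v * f v, memℓp_dmul hw f⟩
  map_add' f g := by
    apply lp.ext
    funext v
    simp only [lp.coeFn_add, Pi.add_apply]
    exact mul_add _ _ _
  map_smul' c f := by
    apply lp.ext
    funext v
    simp only [lp.coeFn_smul, Pi.smul_apply, RingHom.id_apply, smul_eq_mul]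
    ring
  norm_map' f := by
    rw [lp.norm_eq_tsum_rpow htwo, lp.norm_eq_tsum_rpow htwo]
    congr 1
    apply tsum_congr
    intro v
    congr 1
    change ‖w v * f v‖ = ‖f v‖
    rw [norm_mul, hw, one_mul]

@[simp] lemma dmul_apply {w : V → ℂ} (hw : ∀ v, ‖w v‖ = 1) (f : H) (v : V) :
    (dmul hw f : V → ℂ) v = w v * f v := rfl

def uf (T : DirTree V) (θ : ℝ) : V → ℂ := fun v => Complex.exp (θ * Complex.I * T.depth v)

lemma uf_norm (T : DirTree V) (θ : ℝ) : ∀ v, ‖uf T θ v‖ = 1 := by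
  intro v
  have : (θ : ℂ) * Complex.I * T.depth v = ((θ * T.depth v : ℝ) : ℂ) * Complex.I := by
    push_cast; ring
  rw [uf, this, Complex.norm_exp_ofReal_mul_I]

def Dop (T : DirTree V) (θ : ℝ) : H →ₗᵢ[ℂ] H := dmul (uf_norm T θ)

@[simp] lemma Dop_apply (T : DirTree V) (θ : ℝ) (f : H) (v : V) :
    (Dop T θ f : V → ℂ) v = Complex.exp (θ * Complex.I * T.depth v) * f v := rfl

lemma Dop_single (T : DirTree V) (θ : ℝ) (v : V) (a : ℂ) :
    Dop T θ (lp.single 2 v a) = lp.single 2 v (Complex.exp (θ * Complex.I * T.depth v) * a) := by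
  apply lp.ext
  funext j
  by_cases h : j = v
  · subst h
    simp [lp.single_apply_self]
  · simp [lp.single_apply_ne _ _ _ h, Pi.single_apply, h]

lemma cont_D (T : DirTree V) (g : H) : Continuous fun θ : ℝ => (Dop T θ g : H) := by
  have hc1 : ∀ v : V, Continuous fun θ : ℝ => Complex.exp (θ * Complex.I * T.depth v) :=
    fun v => Complex.continuous_exp.comp
      ((Complex.continuous_ofReal.mul continuous_const).mul continuous_const)
  have key : TendstoUniformly
      (fun (s : Finset V) (θ : ℝ) => (Dop T θ (∑ v ∈ s, lp.single 2 v (g v)) : H))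
      (fun θ => (Dop T θ g : H)) atTop := by
    rw [Metric.tendstoUniformly_iff]
    intro ε hε
    have hsum : Tendsto (fun s : Finset V => ∑ v ∈ s, lp.single 2 v (g v)) atTop (nhds g) :=
      lp.hasSum_single (by norm_num : (2:ℝ≥0∞) ≠ ⊤) g
    rw [Metric.tendsto_atTop] at hsum
    obtain ⟨s₀, hs₀⟩ := hsum ε hε
    filter_upwards [eventually_ge_atTop s₀] with s hs θ
    rw [(Dop T θ).isometry.dist_eq, dist_comm]
    exact hs₀ s hs
  have hcont : ∀ s : Finset V,
      Continuous fun θ : ℝ => (Dop T θ (∑ v ∈ s, lp.single 2 v (g v)) : H) := by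
    intro s
    have heq : (fun θ : ℝ => (Dop T θ (∑ v ∈ s, lp.single 2 v (g v)) : H))
        = fun θ : ℝ => ∑ v ∈ s, Complex.exp (θ * Complex.I * T.depth v) • lp.single 2 v (g v) := by
      funext θ
      rw [map_sum]
      refine Finset.sum_congr rfl fun v hv => ?_
      rw [Dop_single, ← smul_eq_mul, lp.single_smul]
    rw [heq]
    exact continuous_finset_sum _ fun v _ => (hc1 v).smul continuous_const
  exact key.continuous (Filter.Eventually.of_forall hcont).frequently

lemma cont_D_param (T : DirTree V) {σ : ℝ → ℝ} {g : ℝ → H}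
    (hσ : Continuous σ) (hg : Continuous g) :
    Continuous fun θ : ℝ => (Dop T (σ θ) (g θ) : H) := by
  rw [continuous_iff_continuousAt]
  intro θ₀
  rw [ContinuousAt, tendsto_iff_dist_tendsto_zero]
  have hb : ∀ θ : ℝ, dist (Dop T (σ θ) (g θ) : H) (Dop T (σ θ₀) (g θ₀) : H)
      ≤ dist (g θ) (g θ₀) + dist (Dop T (σ θ) (g θ₀) : H) (Dop T (σ θ₀) (g θ₀) : H) := by
    intro θ
    calc dist (Dop T (σ θ) (g θ) : H) (Dop T (σ θ₀) (g θ₀) : H)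
        ≤ dist (Dop T (σ θ) (g θ) : H) (Dop T (σ θ) (g θ₀) : H)
          + dist (Dop T (σ θ) (g θ₀) : H) (Dop T (σ θ₀) (g θ₀) : H) := dist_triangle _ _ _
      _ = dist (g θ) (g θ₀) + dist (Dop T (σ θ) (g θ₀) : H) (Dop T (σ θ₀) (g θ₀) : H) := by
          rw [(Dop T (σ θ)).isometry.dist_eq]
  have h1 : Tendsto (fun θ : ℝ => dist (g θ) (g θ₀)) (nhds θ₀) (nhds 0) := by
    have hc : Continuous fun θ : ℝ => dist (g θ) (g θ₀) := hg.dist continuous_const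
    have := hc.tendsto θ₀
    simpa using this
  have h2 : Tendsto (fun θ : ℝ => dist (Dop T (σ θ) (g θ₀) : H) (Dop T (σ θ₀) (g θ₀) : H))
      (nhds θ₀) (nhds 0) := by
    have hc : Continuous fun θ : ℝ => (Dop T (σ θ) (g θ₀) : H) := (cont_D T (g θ₀)).comp hσ
    have hc2 : Continuous fun θ : ℝ =>
        dist (Dop T (σ θ) (g θ₀) : H) (Dop T (σ θ₀) (g θ₀) : H) := hc.dist continuous_const
    have := hc2.tendsto θ₀
    simpa using this
  have hsum := h1.add h2
  rw [add_zero] at hsum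
  exact squeeze_zero (fun θ => dist_nonneg) hb hsum

section Op

def Af (T : DirTree V) (M : H →L[ℂ] H) (pn : ℂ → ℂ) (f : H) (θ : ℝ) : H :=
  pn (Complex.exp ((θ:ℂ) * Complex.I)) • (Dop T (-θ) (M (Dop T θ f)) : H)

lemma cont_Af (T : DirTree V) (M : H →L[ℂ] H) {pn : ℂ → ℂ}
    (hq : Continuous fun θ : ℝ => pn (Complex.exp ((θ:ℂ) * Complex.I))) (f : H) :
    Continuous (Af T M pn f) := by
  have hA : Af T M pn f = fun θ : ℝ =>
      pn (Complex.exp ((θ:ℂ) * Complex.I)) • (Dop T (-θ) (M (Dop T θ f)) : H) := rfl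
  rw [hA]
  have h1 : Continuous fun θ : ℝ => (Dop T θ f : H) := cont_D T f
  have h2 : Continuous fun θ : ℝ => (M (Dop T θ f) : H) := M.continuous.comp h1
  have h4 : Continuous fun θ : ℝ => (Dop T (-θ) (M (Dop T θ f)) : H) :=
    cont_D_param T continuous_neg h2
  exact hq.smul h4

lemma intable_Af (T : DirTree V) (M : H →L[ℂ] H) {pn : ℂ → ℂ}
    (hq : Continuous fun θ : ℝ => pn (Complex.exp ((θ:ℂ) * Complex.I))) (f : H) :
    IntervalIntegrable (Af T M pn f) MeasureTheory.volume 0 (2 * Real.pi) :=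
  (cont_Af T M hq f).intervalIntegrable _ _

lemma norm_Af_le (T : DirTree V) (M : H →L[ℂ] H) (pn : ℂ → ℂ) (f : H) (θ : ℝ) :
    ‖Af T M pn f θ‖ ≤ ‖pn (Complex.exp ((θ:ℂ) * Complex.I))‖ * (‖M‖ * ‖f‖) := by
  rw [Af, norm_smul]
  refine mul_le_mul_of_nonneg_left ?_ (norm_nonneg _)
  rw [(Dop T (-θ)).norm_map]
  calc ‖M (Dop T θ f)‖ ≤ ‖M‖ * ‖(Dop T θ f : H)‖ := M.le_opNorm _
    _ = ‖M‖ * ‖f‖ := by rw [(Dop T θ).norm_map]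

lemma norm_integral_Af_le (T : DirTree V) (M : H →L[ℂ] H) {pn : ℂ → ℂ}
    (hq : Continuous fun θ : ℝ => pn (Complex.exp ((θ:ℂ) * Complex.I))) (f : H) :
    ‖∫ θ in (0:ℝ)..(2 * Real.pi), Af T M pn f θ‖
      ≤ (∫ θ in (0:ℝ)..(2 * Real.pi), ‖pn (Complex.exp ((θ:ℂ) * Complex.I))‖) * (‖M‖ * ‖f‖) := by
  have h1 : ‖∫ θ in (0:ℝ)..(2 * Real.pi), Af T M pn f θ‖
      ≤ ∫ θ in (0:ℝ)..(2 * Real.pi), ‖Af T M pn f θ‖ :=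
    intervalIntegral.norm_integral_le_integral_norm Real.two_pi_pos.le
  refine h1.trans ?_
  have h2 : (∫ θ in (0:ℝ)..(2 * Real.pi), ‖Af T M pn f θ‖)
      ≤ ∫ θ in (0:ℝ)..(2 * Real.pi), ‖pn (Complex.exp ((θ:ℂ) * Complex.I))‖ * (‖M‖ * ‖f‖) := by
    refine intervalIntegral.integral_mono_on Real.two_pi_pos.le
      ((cont_Af T M hq f).norm.intervalIntegrable _ _)
      ((hq.norm.mul continuous_const).intervalIntegrable _ _) ?_
    intro θ _
    exact norm_Af_le T M pn f θ
  refine h2.trans ?_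
  rw [intervalIntegral.integral_mul_const]

def MsLM (T : DirTree V) (M : H →L[ℂ] H) {pn : ℂ → ℂ}
    (hq : Continuous fun θ : ℝ => pn (Complex.exp ((θ:ℂ) * Complex.I))) : H →ₗ[ℂ] H where
  toFun f := (((2 * Real.pi)⁻¹ : ℝ) : ℂ) • ∫ θ in (0:ℝ)..(2 * Real.pi), Af T M pn f θ
  map_add' f g := by
    have h : ∀ θ : ℝ, Af T M pn (f + g) θ = Af T M pn f θ + Af T M pn g θ := by
      intro θ
      rw [Af, Af, Af, map_add, map_add, map_add, smul_add]
    rw [show (fun θ => Af T M pn (f + g) θ) = fun θ => Af T M pn f θ + Af T M pn g θ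
      from funext h]
    rw [intervalIntegral.integral_add (intable_Af T M hq f) (intable_Af T M hq g), smul_add]
  map_smul' a f := by
    have h : ∀ θ : ℝ, Af T M pn (a • f) θ = a • Af T M pn f θ := by
      intro θ
      rw [Af, Af, map_smul, map_smul, map_smul, smul_comm]
    simp only [RingHom.id_apply]
    rw [show (fun θ => Af T M pn (a • f) θ) = fun θ => a • Af T M pn f θ from funext h]
    rw [intervalIntegral.integral_smul, smul_comm]

def MsCLM (T : DirTree V) (M : H →L[ℂ] H) {pn : ℂ → ℂ}
    (hq : Continuous fun θ : ℝ => pn (Complex.exp ((θ:ℂ) * Complex.I))) : H →L[ℂ] H :=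
  LinearMap.mkContinuous (MsLM T M hq)
    (((2 * Real.pi)⁻¹ * ∫ θ in (0:ℝ)..(2 * Real.pi),
        ‖pn (Complex.exp ((θ:ℂ) * Complex.I))‖) * ‖M‖)
    (by
      intro f
      have h0 : (MsLM T M hq) f
          = (((2 * Real.pi)⁻¹ : ℝ) : ℂ) • ∫ θ in (0:ℝ)..(2 * Real.pi), Af T M pn f θ := rfl
      rw [h0, norm_smul, Complex.norm_real, Real.norm_eq_abs,
        abs_of_nonneg (by positivity : (0:ℝ) ≤ (2 * Real.pi)⁻¹)]
      have h1 := norm_integral_Af_le T M hq f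
      calc (2 * Real.pi)⁻¹ * ‖∫ θ in (0:ℝ)..(2 * Real.pi), Af T M pn f θ‖
          ≤ (2 * Real.pi)⁻¹ * ((∫ θ in (0:ℝ)..(2 * Real.pi),
              ‖pn (Complex.exp ((θ:ℂ) * Complex.I))‖) * (‖M‖ * ‖f‖)) :=
            mul_le_mul_of_nonneg_left h1 (by positivity)
        _ = ((2 * Real.pi)⁻¹ * ∫ θ in (0:ℝ)..(2 * Real.pi),
              ‖pn (Complex.exp ((θ:ℂ) * Complex.I))‖) * ‖M‖ * ‖f‖ := by ring)

lemma MsCLM_apply (T : DirTree V) (M : H →L[ℂ] H) {pn : ℂ → ℂ}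
    (hq : Continuous fun θ : ℝ => pn (Complex.exp ((θ:ℂ) * Complex.I))) (f : H) :
    MsCLM T M hq f
      = (((2 * Real.pi)⁻¹ : ℝ) : ℂ) • ∫ θ in (0:ℝ)..(2 * Real.pi), Af T M pn f θ := rfl

lemma MsCLM_norm_le (T : DirTree V) (M : H →L[ℂ] H) {pn : ℂ → ℂ}
    (hq : Continuous fun θ : ℝ => pn (Complex.exp ((θ:ℂ) * Complex.I))) {β : ℝ}
    (hβ : (2 * Real.pi)⁻¹ * ∫ θ in (0:ℝ)..(2 * Real.pi),
      ‖pn (Complex.exp ((θ:ℂ) * Complex.I))‖ ≤ β) :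
    ‖MsCLM T M hq‖ ≤ β * ‖M‖ := by
  have hnn : (0:ℝ) ≤ ∫ θ in (0:ℝ)..(2 * Real.pi), ‖pn (Complex.exp ((θ:ℂ) * Complex.I))‖ :=
    intervalIntegral.integral_nonneg Real.two_pi_pos.le (fun θ _ => norm_nonneg _)
  have hC : (0:ℝ) ≤ ((2 * Real.pi)⁻¹ * ∫ θ in (0:ℝ)..(2 * Real.pi),
      ‖pn (Complex.exp ((θ:ℂ) * Complex.I))‖) * ‖M‖ := by positivity
  refine (LinearMap.mkContinuous_norm_le _ hC _).trans ?_
  exact mul_le_mul_of_nonneg_right hβ (norm_nonneg _)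

def evalCLM (v : V) : H →L[ℂ] ℂ :=
  LinearMap.mkContinuous
    { toFun := fun f : H => f v
      map_add' := fun f g => by simp [lp.coeFn_add]
      map_smul' := fun c f => by simp [lp.coeFn_smul] }
    1 (fun f => by
      rw [one_mul]
      exact lp.norm_apply_le_norm (by norm_num) f v)

@[simp] lemma evalCLM_apply (v : V) (f : H) : evalCLM v f = f v := rfl

lemma ortho (m : ℤ) :
    (∫ θ in (0:ℝ)..(2 * Real.pi), Complex.exp ((m:ℂ) * ((θ:ℂ) * Complex.I)))
      = if m = 0 then ((2 * Real.pi : ℝ) : ℂ) else 0 := by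
  by_cases h : m = 0
  · rw [if_pos h, h]
    simp only [Int.cast_zero, zero_mul, Complex.exp_zero]
    rw [intervalIntegral.integral_const]
    simp
  · rw [if_neg h]
    have hc : ((m : ℂ) * Complex.I) ≠ 0 :=
      mul_ne_zero (Int.cast_ne_zero.2 h) Complex.I_ne_zero
    have heq : ∀ θ : ℝ, (m:ℂ) * ((θ:ℂ) * Complex.I) = ((m:ℂ) * Complex.I) * (θ:ℂ) := by
      intro θ; ring
    simp_rw [heq]
    rw [integral_exp_mul_complex hc]
    have h2 : ((m:ℂ) * Complex.I) * ((2 * Real.pi : ℝ) : ℂ)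
        = (m:ℂ) * (2 * (Real.pi : ℂ) * Complex.I) := by push_cast; ring
    rw [h2, Complex.exp_int_mul_two_pi_mul_I]
    simp

lemma exp_combine (θ : ℝ) (dv k : ℕ) (hk : k ≤ dv) (j : ℤ) :
    Complex.exp ((θ:ℂ) * Complex.I) ^ j
      * (Complex.exp (((-θ : ℝ):ℂ) * Complex.I * (dv:ℂ))
        * Complex.exp ((θ:ℂ) * Complex.I * ((dv - k : ℕ):ℂ)))
      = Complex.exp (((j - (k:ℤ)):ℂ) * ((θ:ℂ) * Complex.I)) := by
  rw [← Complex.exp_int_mul, ← Complex.exp_add, ← Complex.exp_add]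
  congr 1
  have hcast : ((dv - k : ℕ) : ℂ) = (dv : ℂ) - (k : ℂ) := by
    push_cast [Nat.cast_sub hk]
    ring
  rw [hcast]
  push_cast
  ring

lemma Af_coord (T : DirTree V) (lam : V → ℝ) (M : H →L[ℂ] H) (φ : ℕ → ℂ)
    (hM : IsMultOp T lam φ M) (Nn : ℕ) (cn : ℤ → ℂ) (pn : ℂ → ℂ)
    (hpn : ∀ z : ℂ, z ≠ 0 → pn z = ∑ j ∈ Finset.Icc (-(Nn:ℤ)) (Nn:ℤ), cn j * z ^ j)
    (f : H) (v : V) (θ : ℝ) :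
    (Af T M pn f θ : V → ℂ) v
      = ∑ k ∈ Finset.range (T.depth v + 1), ∑ j ∈ Finset.Icc (-(Nn:ℤ)) (Nn:ℤ),
          (wProd T (fun u => (lam u : ℂ)) v k * φ k * f (T.par^[k] v) * cn j)
            * Complex.exp (((j - (k:ℤ)):ℂ) * ((θ:ℂ) * Complex.I)) := by
  have e1 : (Af T M pn f θ : V → ℂ) v
      = pn (Complex.exp ((θ:ℂ) * Complex.I))
        * (Complex.exp (((-θ:ℝ):ℂ) * Complex.I * (T.depth v : ℂ)) * (M (Dop T θ f)) v) := by
    simp only [Af, lp.coeFn_smul, Pi.smul_apply, smul_eq_mul, Dop_apply]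
  rw [e1, hM (Dop T θ f) v, Gamma]
  have e2 : ∀ k ∈ Finset.range (T.depth v + 1),
      wProd T (fun u => ((lam u : ℝ) : ℂ)) v k * φ k * (⇑(Dop T θ f)) (T.par^[k] v)
        = wProd T (fun u => ((lam u : ℝ) : ℂ)) v k * φ k
            * (Complex.exp ((θ:ℂ) * Complex.I * ((T.depth v - k : ℕ):ℂ)) * f (T.par^[k] v)) := by
    intro k hk
    rw [Finset.mem_range] at hk
    have hk' : k ≤ T.depth v := by omega
    rw [Dop_apply, depth_iter T hk']
  rw [Finset.sum_congr rfl e2, hpn _ (Complex.exp_ne_zero _)]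
  rw [Finset.mul_sum (Finset.range (T.depth v + 1))
    (fun k => wProd T (fun u => ((lam u : ℝ) : ℂ)) v k * φ k
      * (Complex.exp ((θ:ℂ) * Complex.I * ((T.depth v - k : ℕ):ℂ)) * f (T.par^[k] v)))
    (Complex.exp (((-θ:ℝ):ℂ) * Complex.I * (T.depth v : ℂ)))]
  rw [Finset.sum_mul_sum]
  rw [Finset.sum_comm]
  refine Finset.sum_congr rfl fun k hk => Finset.sum_congr rfl fun j hj => ?_
  rw [Finset.mem_range] at hk
  have hk' : k ≤ T.depth v := by omega
  rw [← exp_combine θ (T.depth v) k hk' j]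
  ring

lemma ortho2 (j : ℤ) (k : ℕ) :
    (∫ θ in (0:ℝ)..(2 * Real.pi), Complex.exp (((j - (k:ℤ)):ℂ) * ((θ:ℂ) * Complex.I)))
      = if j = (k:ℤ) then ((2 * Real.pi : ℝ) : ℂ) else 0 := by
  have hcast : ∀ θ : ℝ, ((j - (k:ℤ)):ℂ) * ((θ:ℂ) * Complex.I)
      = (((j - (k:ℤ) : ℤ)):ℂ) * ((θ:ℂ) * Complex.I) := by
    intro θ; push_cast; ring
  simp_rw [hcast]
  rw [ortho (j - (k:ℤ))]
  by_cases h : j = (k:ℤ)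
  · rw [if_pos (by omega), if_pos h]
  · rw [if_neg (by omega), if_neg h]

lemma MsCLM_coord (T : DirTree V) (lam : V → ℝ) (M : H →L[ℂ] H) (φ : ℕ → ℂ)
    (hM : IsMultOp T lam φ M) (Nn : ℕ) (cn : ℤ → ℂ) {pn : ℂ → ℂ}
    (hpn : ∀ z : ℂ, z ≠ 0 → pn z = ∑ j ∈ Finset.Icc (-(Nn:ℤ)) (Nn:ℤ), cn j * z ^ j)
    (hq : Continuous fun θ : ℝ => pn (Complex.exp ((θ:ℂ) * Complex.I)))
    (f : H) (v : V) :
    MsCLM T M hq f v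
      = Gamma T (fun u => (lam u : ℂ))
          (fun k => (if (k:ℤ) ≤ (Nn:ℤ) then cn (k:ℤ) else 0) * φ k) (⇑f) v := by
  have h2π : ((2 * Real.pi : ℝ) : ℂ) ≠ 0 := by
    simp [Real.pi_ne_zero]
  have hcont1 : ∀ a : ℂ, Continuous fun θ : ℝ => Complex.exp (a * ((θ:ℂ) * Complex.I)) :=
    fun a => Complex.continuous_exp.comp
      (continuous_const.mul (Complex.continuous_ofReal.mul continuous_const))
  have s1 : (MsCLM T M hq f : V → ℂ) v
      = (((2 * Real.pi)⁻¹ : ℝ) : ℂ)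
        * ∫ θ in (0:ℝ)..(2 * Real.pi), (Af T M pn f θ : V → ℂ) v := by
    rw [MsCLM_apply, lp.coeFn_smul, Pi.smul_apply, smul_eq_mul]
    congr 1
    have hcc := ContinuousLinearMap.intervalIntegral_comp_comm (evalCLM v)
      (intable_Af T M hq f)
    calc ((∫ θ in (0:ℝ)..(2 * Real.pi), Af T M pn f θ : H) : V → ℂ) v
        = evalCLM v (∫ θ in (0:ℝ)..(2 * Real.pi), Af T M pn f θ) := rfl
      _ = ∫ θ in (0:ℝ)..(2 * Real.pi), evalCLM v (Af T M pn f θ) := hcc.symm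
      _ = ∫ θ in (0:ℝ)..(2 * Real.pi), (Af T M pn f θ : V → ℂ) v := rfl
  rw [s1]
  have s2 : (∫ θ in (0:ℝ)..(2 * Real.pi), (Af T M pn f θ : V → ℂ) v)
      = ∫ θ in (0:ℝ)..(2 * Real.pi), ∑ k ∈ Finset.range (T.depth v + 1),
          ∑ j ∈ Finset.Icc (-(Nn:ℤ)) (Nn:ℤ),
          (wProd T (fun u => ((lam u : ℝ) : ℂ)) v k * φ k * f (T.par^[k] v) * cn j)
            * Complex.exp (((j - (k:ℤ)):ℂ) * ((θ:ℂ) * Complex.I)) := by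
    refine intervalIntegral.integral_congr fun θ _ => ?_
    exact Af_coord T lam M φ hM Nn cn pn hpn f v θ
  rw [s2]
  rw [intervalIntegral.integral_finset_sum (f := fun k θ => ∑ j ∈ Finset.Icc (-(Nn:ℤ)) (Nn:ℤ),
      (wProd T (fun u => ((lam u : ℝ) : ℂ)) v k * φ k * f (T.par^[k] v) * cn j) * Complex.exp (((j - (k:ℤ)):ℂ) * ((θ:ℂ) * Complex.I))) (fun k hk =>
    (continuous_finset_sum _ fun j hj =>
      continuous_const.mul (hcont1 _)).intervalIntegrable _ _)]
  have s3 : ∀ k ∈ Finset.range (T.depth v + 1),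
      (∫ θ in (0:ℝ)..(2 * Real.pi), ∑ j ∈ Finset.Icc (-(Nn:ℤ)) (Nn:ℤ),
        (wProd T (fun u => ((lam u : ℝ) : ℂ)) v k * φ k * f (T.par^[k] v) * cn j)
          * Complex.exp (((j - (k:ℤ)):ℂ) * ((θ:ℂ) * Complex.I)))
      = ((2 * Real.pi : ℝ) : ℂ)
        * (wProd T (fun u => ((lam u : ℝ) : ℂ)) v k
            * ((if (k:ℤ) ≤ (Nn:ℤ) then cn (k:ℤ) else 0) * φ k) * f (T.par^[k] v)) := by
    intro k hk
    rw [intervalIntegral.integral_finset_sum (f := fun j θ =>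
        (wProd T (fun u => ((lam u : ℝ) : ℂ)) v k * φ k * f (T.par^[k] v) * cn j) * Complex.exp (((j - (k:ℤ)):ℂ) * ((θ:ℂ) * Complex.I))) (fun j hj =>
      (continuous_const.mul (hcont1 _)).intervalIntegrable _ _)]
    have t1 : ∀ j ∈ Finset.Icc (-(Nn:ℤ)) (Nn:ℤ),
        (∫ θ in (0:ℝ)..(2 * Real.pi),
          (wProd T (fun u => ((lam u : ℝ) : ℂ)) v k * φ k * f (T.par^[k] v) * cn j)
            * Complex.exp (((j - (k:ℤ)):ℂ) * ((θ:ℂ) * Complex.I)))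
        = if j = (k:ℤ) then
            (wProd T (fun u => ((lam u : ℝ) : ℂ)) v k * φ k * f (T.par^[k] v) * cn j)
              * ((2 * Real.pi : ℝ) : ℂ) else 0 := by
      intro j hj
      rw [intervalIntegral.integral_const_mul, ortho2 j k]
      by_cases hjk : j = (k:ℤ)
      · rw [if_pos hjk, if_pos hjk]
      · rw [if_neg hjk, if_neg hjk, mul_zero]
    rw [Finset.sum_congr rfl t1]
    rw [Finset.sum_ite_eq' (Finset.Icc (-(Nn:ℤ)) (Nn:ℤ)) ((k:ℤ))
      (fun j => (wProd T (fun u => ((lam u : ℝ) : ℂ)) v k * φ k * f (T.par^[k] v) * cn j)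
        * ((2 * Real.pi : ℝ) : ℂ))]
    by_cases hkN : (k:ℤ) ≤ (Nn:ℤ)
    · rw [if_pos (Finset.mem_Icc.2 ⟨by omega, hkN⟩), if_pos hkN]
      ring
    · rw [if_neg (fun hmem => hkN (Finset.mem_Icc.1 hmem).2), if_neg hkN]
      ring
  rw [Finset.sum_congr rfl s3, ← Finset.mul_sum, Gamma, ← mul_assoc]
  have : (((2 * Real.pi)⁻¹ : ℝ) : ℂ) * ((2 * Real.pi : ℝ) : ℂ) = 1 := by
    rw [Complex.ofReal_inv]
    exact inv_mul_cancel₀ h2π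
  rw [this, one_mul]

lemma Gamma_single (T : DirTree V) (lam' : V → ℂ) (ψ : ℕ → ℂ) (u v : V) :
    Gamma T lam' ψ (⇑(lp.single 2 u (1:ℂ))) v
      = wProd T lam' v (T.depth v - T.depth u) * ψ (T.depth v - T.depth u)
          * (lp.single 2 u (1:ℂ) : V → ℂ) (T.par^[T.depth v - T.depth u] v) := by
  rw [Gamma]
  refine Finset.sum_eq_single (T.depth v - T.depth u) (fun k hk hne => ?_) (fun hk => ?_)
  · rw [Finset.mem_range] at hk
    have hk' : k ≤ T.depth v := by omega
    have hz : (lp.single 2 u (1:ℂ) : V → ℂ) (T.par^[k] v) = 0 := by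
      apply lp.single_apply_ne
      intro heq
      apply hne
      have hd := depth_iter T hk'
      rw [heq] at hd
      omega
    rw [hz, mul_zero]
  · exact absurd (Finset.mem_range.2 (by omega)) hk

lemma tendsto_single (T : DirTree V) (lam : V → ℝ) (φ : ℕ → ℂ) (M : H →L[ℂ] H)
    (hM : IsMultOp T lam φ M) (Ms : ℕ → H →L[ℂ] H) (ψ : ℕ → ℕ → ℂ)
    (hMs : ∀ n, IsMultOp T lam (fun k => ψ n k * φ k) (Ms n))
    (α : ℝ) (hα : ∀ n k, ‖ψ n k‖ ≤ α)
    (hb : ∀ k : ℕ, Tendsto (fun n => ψ n k) atTop (nhds 1)) (u : V) :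
    Tendsto (fun n => Ms n (lp.single 2 u 1)) atTop (nhds (M (lp.single 2 u 1))) := by
  have hα1 : (0:ℝ) ≤ α + 1 := by
    have := (norm_nonneg (ψ 0 0)).trans (hα 0 0)
    linarith
  have hcoord : ∀ (n : ℕ) (v : V),
      ((Ms n (lp.single 2 u (1:ℂ)) - M (lp.single 2 u (1:ℂ)) : H) : V → ℂ) v
        = (ψ n (T.depth v - T.depth u) - 1) * (M (lp.single 2 u (1:ℂ))) v := by
    intro n v
    have h1 : ((Ms n (lp.single 2 u (1:ℂ)) - M (lp.single 2 u (1:ℂ)) : H) : V → ℂ) v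
        = (Ms n (lp.single 2 u (1:ℂ))) v - (M (lp.single 2 u (1:ℂ))) v := by
      rw [lp.coeFn_sub, Pi.sub_apply]
    rw [h1, hMs n (lp.single 2 u (1:ℂ)) v, hM (lp.single 2 u (1:ℂ)) v,
      Gamma_single, Gamma_single]
    ring
  have hgsum : Summable (fun v : V => ‖(M (lp.single 2 u (1:ℂ))) v‖ ^ (2:ℝ≥0∞).toReal) := by
    have := lp.memℓp (M (lp.single 2 u (1:ℂ)))
    rwa [memℓp_gen_iff htwo] at this
  have key : Tendsto (fun n => ∑' v : V,
      ‖((Ms n (lp.single 2 u (1:ℂ)) - M (lp.single 2 u (1:ℂ)) : H) : V → ℂ) v‖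
        ^ (2:ℝ≥0∞).toReal) atTop (nhds 0) := by
    have h0 : (nhds (0:ℝ)) = nhds (∑' _ : V, (0:ℝ)) := by simp
    rw [h0]
    refine tendsto_tsum_of_dominated_convergence
      (bound := fun v => ((α + 1) * ‖(M (lp.single 2 u (1:ℂ))) v‖) ^ (2:ℝ≥0∞).toReal)
      ?_ ?_ ?_
    · have hb2 : (fun v : V => ((α + 1) * ‖(M (lp.single 2 u (1:ℂ))) v‖) ^ (2:ℝ≥0∞).toReal)
          = fun v : V => (α+1) ^ (2:ℝ≥0∞).toReal
              * ‖(M (lp.single 2 u (1:ℂ))) v‖ ^ (2:ℝ≥0∞).toReal := by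
        funext v
        rw [Real.mul_rpow hα1 (norm_nonneg _)]
      rw [hb2]
      exact hgsum.mul_left _
    · intro v
      simp only [hcoord]
      have h2 : Tendsto (fun n => ψ n (T.depth v - T.depth u) - 1) atTop (nhds 0) := by
        have := (hb (T.depth v - T.depth u)).sub_const 1
        simpa using this
      have h3 := h2.norm
      rw [norm_zero] at h3
      have h4 := h3.mul_const ‖(M (lp.single 2 u (1:ℂ))) v‖
      rw [zero_mul] at h4
      have h5 : Tendsto (fun n =>
          ‖(ψ n (T.depth v - T.depth u) - 1) * (M (lp.single 2 u (1:ℂ))) v‖) atTop (nhds 0) := by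
        simpa [norm_mul] using h4
      have h6 := h5.rpow_const (p := (2:ℝ≥0∞).toReal) (Or.inr (le_of_lt htwo))
      rwa [Real.zero_rpow (ne_of_gt htwo)] at h6
    · refine Filter.Eventually.of_forall fun n v => ?_
      rw [Real.norm_eq_abs, abs_of_nonneg (Real.rpow_nonneg (norm_nonneg _) _)]
      refine Real.rpow_le_rpow (norm_nonneg _) ?_ (le_of_lt htwo)
      rw [hcoord, norm_mul]
      refine mul_le_mul_of_nonneg_right ?_ (norm_nonneg _)
      calc ‖ψ n (T.depth v - T.depth u) - 1‖
          ≤ ‖ψ n (T.depth v - T.depth u)‖ + ‖(1:ℂ)‖ := norm_sub_le _ _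
        _ ≤ α + 1 := by rw [norm_one]; exact add_le_add_left (hα n _) 1
  rw [tendsto_iff_norm_sub_tendsto_zero]
  have hnorm : (fun n => ‖Ms n (lp.single 2 u (1:ℂ)) - M (lp.single 2 u (1:ℂ))‖)
      = fun n => (∑' v : V,
          ‖((Ms n (lp.single 2 u (1:ℂ)) - M (lp.single 2 u (1:ℂ)) : H) : V → ℂ) v‖
            ^ (2:ℝ≥0∞).toReal) ^ (1 / (2:ℝ≥0∞).toReal) :=
    funext fun n => lp.norm_eq_tsum_rpow htwo _
  rw [hnorm]
  have hfinal := key.rpow_const (p := 1 / (2:ℝ≥0∞).toReal)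
    (Or.inr (by positivity))
  rwa [Real.zero_rpow (by
    have := htwo
    positivity)] at hfinal

end Op

end Stmt3

/-- Lemma: polynomial approximation within `𝓜(λ)` via a sequence of
trigonometric polynomials `p_n(z) = ∑_{k=-N_n}^{N_n} c_{n,k} z^k` whose coefficients are
uniformly bounded, converge to `1` pointwise, and whose `L¹(𝕋)`-norms are bounded by `β`. -/
theorem stmt3 [Countable V] [Infinite V] (T : DirTree V) (hTl : T.Leafless)
    (lam : V → ℝ) (hlam : ∀ v, v ≠ T.root → 0 < lam v)
    (S : lp (fun _ : V => ℂ) 2 →L[ℂ] lp (fun _ : V => ℂ) 2) (hS : IsShift T lam S)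
    (φ : ℕ → ℂ)
    (M : lp (fun _ : V => ℂ) 2 →L[ℂ] lp (fun _ : V => ℂ) 2) (hM : IsMultOp T lam φ M)
    (N : ℕ → ℕ) (c : ℕ → ℤ → ℂ)
    (p : ℕ → ℂ → ℂ)
    (hp : ∀ n : ℕ, ∀ z : ℂ, z ≠ 0 →
      p n z = ∑ k ∈ Finset.Icc (-(N n : ℤ)) (N n : ℤ), c n k * z ^ k)
    (phat : ℕ → ℕ → ℂ)
    (hphat : ∀ n k : ℕ, phat n k = if (k : ℤ) ≤ (N n : ℤ) then c n (k : ℤ) else 0)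
    (ha : ∃ α : ℝ, ∀ n k : ℕ, ‖phat n k‖ ≤ α)
    (hb : ∀ k : ℕ, Filter.Tendsto (fun n => phat n k) Filter.atTop (nhds 1))
    (β : ℝ)
    (hβ : ∀ n : ℕ,
      (2 * Real.pi)⁻¹ * ∫ θ in (0:ℝ)..(2 * Real.pi),
          ‖p n (Complex.exp (θ * Complex.I))‖ ≤ β) :
    ∃ Ms : ℕ → (lp (fun _ : V => ℂ) 2 →L[ℂ] lp (fun _ : V => ℂ) 2),
      (∀ n : ℕ, IsMultOp T lam (fun k => phat n k * φ k) (Ms n)) ∧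
      (∀ n : ℕ, ‖Ms n‖ ≤ β * ‖M‖) ∧
      (∀ f : lp (fun _ : V => ℂ) 2,
        Filter.Tendsto (fun n => Ms n f) Filter.atTop (nhds (M f))) := by
  classical
  have hq : ∀ n : ℕ, Continuous fun θ : ℝ => p n (Complex.exp ((θ:ℂ) * Complex.I)) := by
    intro n
    have h1 : (fun θ : ℝ => p n (Complex.exp ((θ:ℂ) * Complex.I)))
        = fun θ : ℝ => ∑ j ∈ Finset.Icc (-(N n:ℤ)) (N n:ℤ),
            c n j * Complex.exp ((θ:ℂ) * Complex.I) ^ j :=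
      funext fun θ => hp n _ (Complex.exp_ne_zero _)
    rw [h1]
    refine continuous_finset_sum _ fun j _ => continuous_const.mul ?_
    have h2 : (fun θ : ℝ => Complex.exp ((θ:ℂ) * Complex.I) ^ j)
        = fun θ : ℝ => Complex.exp ((j:ℂ) * ((θ:ℂ) * Complex.I)) := by
      funext θ; rw [Complex.exp_int_mul]
    rw [h2]
    exact Complex.continuous_exp.comp
      (continuous_const.mul (Complex.continuous_ofReal.mul continuous_const))
  have hMs : ∀ n, IsMultOp T lam (fun k => phat n k * φ k) (Stmt3.MsCLM T M (hq n)) := by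
    intro n f v
    rw [Stmt3.MsCLM_coord T lam M φ hM (N n) (c n) (hp n) (hq n) f v]
    simp only [hphat]
  have hnorms : ∀ n, ‖Stmt3.MsCLM T M (hq n)‖ ≤ β * ‖M‖ :=
    fun n => Stmt3.MsCLM_norm_le T M (hq n) (hβ n)
  refine ⟨fun n => Stmt3.MsCLM T M (hq n), hMs, hnorms, ?_⟩
  obtain ⟨α, hα⟩ := ha
  have hsingle : ∀ u : V, Tendsto (fun n => Stmt3.MsCLM T M (hq n) (lp.single 2 u 1)) atTop
      (nhds (M (lp.single 2 u 1))) :=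
    fun u => Stmt3.tendsto_single T lam φ M hM _ phat hMs α hα hb u
  have hβM : (0:ℝ) ≤ β * ‖M‖ := (norm_nonneg _).trans (hnorms 0)
  intro f
  have hsingle' : ∀ (u : V) (a : ℂ),
      Tendsto (fun n => Stmt3.MsCLM T M (hq n) (lp.single 2 u a))
        atTop (nhds (M (lp.single 2 u a))) := by
    intro u a
    have h1 : (lp.single 2 u a : lp (fun _ : V => ℂ) 2) = a • lp.single 2 u (1:ℂ) := by
      rw [← lp.single_smul]
      congr 1
      rw [smul_eq_mul, mul_one]
    rw [h1]
    have h2 : ∀ n, Stmt3.MsCLM T M (hq n) (a • lp.single 2 u (1:ℂ))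
        = a • Stmt3.MsCLM T M (hq n) (lp.single 2 u (1:ℂ)) := fun n => map_smul _ _ _
    rw [map_smul]
    simp only [h2]
    exact (hsingle u).const_smul a
  have hfin : ∀ s : Finset V,
      Tendsto (fun n => Stmt3.MsCLM T M (hq n) (∑ v ∈ s, lp.single 2 v (f v))) atTop
        (nhds (M (∑ v ∈ s, lp.single 2 v (f v)))) := by
    intro s
    have h2 : ∀ n, Stmt3.MsCLM T M (hq n) (∑ v ∈ s, lp.single 2 v (f v))
        = ∑ v ∈ s, Stmt3.MsCLM T M (hq n) (lp.single 2 v (f v)) := fun n => map_sum _ _ _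
    rw [map_sum]
    simp only [h2]
    exact tendsto_finset_sum _ fun v _ => hsingle' v (f v)
  rw [Metric.tendsto_atTop]
  intro ε hε
  have hB : (0:ℝ) < β * ‖M‖ + ‖M‖ + 1 := by
    have := norm_nonneg M; linarith
  obtain ⟨s, hs⟩ : ∃ s : Finset V,
      ‖f - ∑ v ∈ s, lp.single 2 v (f v)‖ < ε / (3 * (β * ‖M‖ + ‖M‖ + 1)) := by
    have hsum : Tendsto (fun s : Finset V => ∑ v ∈ s, lp.single 2 v (f v)) atTop (nhds f) :=
      lp.hasSum_single (by norm_num) f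
    rw [Metric.tendsto_atTop] at hsum
    obtain ⟨s₀, hs₀⟩ := hsum (ε / (3 * (β * ‖M‖ + ‖M‖ + 1))) (by positivity)
    refine ⟨s₀, ?_⟩
    have h3 := hs₀ s₀ le_rfl
    rwa [dist_eq_norm, ← norm_neg, neg_sub] at h3
  have hmid := hfin s
  rw [Metric.tendsto_atTop] at hmid
  obtain ⟨n₀, hn₀⟩ := hmid (ε / 3) (by positivity)
  refine ⟨n₀, fun n hn => ?_⟩
  have t1 : ‖Stmt3.MsCLM T M (hq n) f
      - Stmt3.MsCLM T M (hq n) (∑ v ∈ s, lp.single 2 v (f v))‖ ≤ ε / 3 := by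
    rw [← map_sub]
    calc ‖Stmt3.MsCLM T M (hq n) (f - ∑ v ∈ s, lp.single 2 v (f v))‖
        ≤ ‖Stmt3.MsCLM T M (hq n)‖ * ‖f - ∑ v ∈ s, lp.single 2 v (f v)‖ :=
          ContinuousLinearMap.le_opNorm _ _
      _ ≤ (β * ‖M‖ + ‖M‖ + 1) * (ε / (3 * (β * ‖M‖ + ‖M‖ + 1))) := by
          refine mul_le_mul ?_ hs.le (norm_nonneg _) hB.le
          have h4 := hnorms n; have h5 := norm_nonneg M; linarith
      _ = ε / 3 := by rw [mul_comm 3, ← mul_div_assoc, mul_div_mul_left ε 3 hB.ne']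
  have t3 : ‖M (∑ v ∈ s, lp.single 2 v (f v)) - M f‖ ≤ ε / 3 := by
    rw [← map_sub]
    calc ‖M (∑ v ∈ s, lp.single 2 v (f v) - f)‖
        ≤ ‖M‖ * ‖∑ v ∈ s, lp.single 2 v (f v) - f‖ := M.le_opNorm _
      _ ≤ (β * ‖M‖ + ‖M‖ + 1) * (ε / (3 * (β * ‖M‖ + ‖M‖ + 1))) := by
          refine mul_le_mul ?_ ?_ (norm_nonneg _) hB.le
          · linarith
          · rw [← norm_neg, neg_sub]; exact hs.le
      _ = ε / 3 := by rw [mul_comm 3, ← mul_div_assoc, mul_div_mul_left ε 3 hB.ne']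
  have t2 := hn₀ n hn
  have htri := dist_triangle4 (Stmt3.MsCLM T M (hq n) f)
    (Stmt3.MsCLM T M (hq n) (∑ v ∈ s, lp.single 2 v (f v)))
    (M (∑ v ∈ s, lp.single 2 v (f v))) (M f)
  simp only [dist_eq_norm] at htri t2 ⊢
  linarith
end
end

section
/- The set ℳ(λ) = {M_φ̂ : φ̂ ∈ 𝓜(λ)} of bounded multiplication operators is closed in B(ℓ²(V)) in the strong operator topology. -/
open Filter Finset Classical

set_option linter.unusedVariables false
open scoped ComplexConjugate ENNReal

noncomputable section
attribute [local instance] Classical.propDecidable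

variable {V : Type*}

namespace Stmt5Aux

lemma depth_iter (T : DirTree V) (v : V) :
    ∀ n, n ≤ T.depth v → T.depth (T.par^[n] v) = T.depth v - n := by
  intro n
  induction n with
  | zero => simp
  | succ n ih =>
    intro hn
    have hn' : n ≤ T.depth v := Nat.le_of_succ_le hn
    have h1 := ih hn'
    have hne : T.par^[n] v ≠ T.root := by
      intro h
      have := (T.depth_eq_zero (T.par^[n] v)).mpr h
      omega
    have h2 := T.depth_par _ hne
    rw [Function.iterate_succ_apply']
    omega

lemma iter_ne_root (T : DirTree V) (v : V) {n : ℕ} (hn : n < T.depth v) :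
    T.par^[n] v ≠ T.root := by
  intro h
  have h1 := depth_iter T v n (le_of_lt hn)
  have := (T.depth_eq_zero (T.par^[n] v)).mpr h
  omega

lemma iter_root_iff (T : DirTree V) (v : V) {k : ℕ} (hk : k ≤ T.depth v) :
    T.par^[k] v = T.root ↔ k = T.depth v := by
  constructor
  · intro h
    have h1 := depth_iter T v k hk
    have := (T.depth_eq_zero (T.par^[k] v)).mpr h
    omega
  · intro h
    subst h
    have h1 := depth_iter T v (T.depth v) le_rfl
    exact (T.depth_eq_zero _).mp (by omega)

/-- A chain of vertices with `chain k` of depth `k`. -/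
def chain (T : DirTree V) (hTl : T.Leafless) : ℕ → V
  | 0 => T.root
  | k + 1 => (hTl (chain T hTl k)).choose

lemma chain_par (T : DirTree V) (hTl : T.Leafless) (k : ℕ) :
    T.par (chain T hTl (k + 1)) = chain T hTl k :=
  (hTl (chain T hTl k)).choose_spec.2

lemma chain_ne_root (T : DirTree V) (hTl : T.Leafless) (k : ℕ) :
    chain T hTl (k + 1) ≠ T.root :=
  (hTl (chain T hTl k)).choose_spec.1

lemma chain_depth (T : DirTree V) (hTl : T.Leafless) (k : ℕ) :
    T.depth (chain T hTl k) = k := by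
  induction k with
  | zero => exact (T.depth_eq_zero _).mpr rfl
  | succ k ih =>
    have := T.depth_par _ (chain_ne_root T hTl k)
    rw [chain_par T hTl k, ih] at this
    omega

lemma wProd_ne_zero (T : DirTree V) (lam : V → ℝ) (hlam : ∀ v, v ≠ T.root → 0 < lam v)
    (v : V) (k : ℕ) (hk : k ≤ T.depth v) :
    wProd T (fun u => (lam u : ℂ)) v k ≠ 0 := by
  refine Finset.prod_ne_zero_iff.mpr fun n hn => ?_
  have hn' : n < T.depth v := lt_of_lt_of_le (Finset.mem_range.mp hn) hk
  have := hlam _ (iter_ne_root T v hn')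
  simp only [ne_eq, Complex.ofReal_eq_zero]
  exact ne_of_gt this

/-- Value of `Γ_φ` on the indicator of the root. -/
lemma Gamma_root_indicator (T : DirTree V) (lamC : V → ℂ) (φ : ℕ → ℂ)
    (g : V → ℂ) (hg : ∀ u, g u = if u = T.root then 1 else 0) (v : V) :
    Gamma T lamC φ g v = wProd T lamC v (T.depth v) * φ (T.depth v) := by
  unfold Gamma
  rw [Finset.sum_eq_single (T.depth v)]
  · rw [hg, if_pos ((iter_root_iff T v le_rfl).mpr rfl), mul_one]
  · intro k hk hne
    have hk' : k ≤ T.depth v := Nat.lt_succ_iff.mp (Finset.mem_range.mp hk)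
    rw [hg, if_neg (fun h => hne ((iter_root_iff T v hk').mp h)), mul_zero]
  · intro h
    exact absurd (Finset.mem_range.mpr (Nat.lt_succ_self _)) h

end Stmt5Aux

open Stmt5Aux in
/-- Proposition: the set `ℳ(λ)` of bounded multiplication operators is
closed in the strong operator topology: any bounded operator `A` each of whose SOT-basic
neighborhoods contains a multiplication operator is itself a multiplication operator. -/
theorem stmt5 [Countable V] [Infinite V] (T : DirTree V) (hTl : T.Leafless)
    (lam : V → ℝ) (hlam : ∀ v, v ≠ T.root → 0 < lam v)
    (S : lp (fun _ : V => ℂ) 2 →L[ℂ] lp (fun _ : V => ℂ) 2) (hS : IsShift T lam S)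
    (A : lp (fun _ : V => ℂ) 2 →L[ℂ] lp (fun _ : V => ℂ) 2)
    (hA : ∀ ε : ℝ, 0 < ε → ∀ s : Finset (lp (fun _ : V => ℂ) 2),
      ∃ φ : ℕ → ℂ, ∃ M : lp (fun _ : V => ℂ) 2 →L[ℂ] lp (fun _ : V => ℂ) 2,
        IsMultOp T lam φ M ∧ ∀ f ∈ s, ‖M f - A f‖ < ε) :
    ∃ φ : ℕ → ℂ, IsMultOp T lam φ A := by
  classical
  set lamC : V → ℂ := fun u => (lam u : ℂ) with hlamC
  -- the root indicator
  set e₀ : lp (fun _ : V => ℂ) 2 := lp.single 2 T.root (1 : ℂ) with he₀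
  have he₀app : ∀ u : V, e₀ u = if u = T.root then 1 else 0 := by
    intro u
    by_cases h : u = T.root
    · subst h; rw [if_pos rfl]; exact lp.single_apply_self 2 T.root 1
    · rw [if_neg h]; exact lp.single_apply_ne 2 T.root 1 h
  -- weights along the chain
  set w : ℕ → ℂ := fun k => wProd T lamC (chain T hTl k) k with hw
  have hwne : ∀ k, w k ≠ 0 := by
    intro k
    exact wProd_ne_zero T lam hlam _ k (le_of_eq (chain_depth T hTl k).symm)
  -- the candidate symbol
  refine ⟨fun k => (A e₀) (chain T hTl k) / w k, ?_⟩
  intro f v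
  set φ : ℕ → ℂ := fun k => (A e₀) (chain T hTl k) / w k with hφ
  -- key: for any mult op M with symbol ψ, ψ k = M e₀ (chain k) / w k
  have key : ∀ (ψ : ℕ → ℂ) (M : lp (fun _ : V => ℂ) 2 →L[ℂ] lp (fun _ : V => ℂ) 2),
      IsMultOp T lam ψ M → ∀ k, ψ k = (M e₀) (chain T hTl k) / w k := by
    intro ψ M hM k
    have := hM e₀ (chain T hTl k)
    rw [Gamma_root_indicator T lamC ψ (⇑e₀) he₀app, chain_depth T hTl k] at this
    rw [this, mul_comm, mul_div_assoc, div_self (hwne k), mul_one]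
  -- show the coordinate identity by an ε-argument
  suffices h0 : ‖(A f) v - Gamma T lamC φ (⇑f) v‖ = 0 by
    exact sub_eq_zero.mp (norm_eq_zero.mp h0)
  by_contra hne0
  have hpos : 0 < ‖A f v - Gamma T lamC φ (⇑f) v‖ :=
    lt_of_le_of_ne (norm_nonneg _) (Ne.symm hne0)
  set ε := ‖A f v - Gamma T lamC φ (⇑f) v‖ with hε
  -- the constant C
  set C : ℝ := ∑ k ∈ Finset.range (T.depth v + 1),
      ‖wProd T lamC v k * f (T.par^[k] v)‖ / ‖w k‖ with hC
  have hC0 : 0 ≤ C := Finset.sum_nonneg fun k _ => div_nonneg (norm_nonneg _) (norm_nonneg _)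
  have hδpos : 0 < ε / (C + 1) := div_pos hpos (by linarith)
  obtain ⟨ψ, M, hM, hclose⟩ := hA (ε / (C + 1)) hδpos {f, e₀}
  have hf : ‖M f - A f‖ < ε / (C + 1) := hclose f (by simp)
  have he : ‖M e₀ - A e₀‖ < ε / (C + 1) := hclose e₀ (by simp)
  -- pointwise bound on ψ - φ
  have hψφ : ∀ k, ‖ψ k - φ k‖ ≤ (ε / (C + 1)) / ‖w k‖ := by
    intro k
    rw [key ψ M hM k, hφ]
    rw [div_sub_div_same]
    rw [norm_div]
    gcongr
    calc ‖(M e₀) (chain T hTl k) - (A e₀) (chain T hTl k)‖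
        = ‖(M e₀ - A e₀) (chain T hTl k)‖ := by rw [lp.coeFn_sub]; rfl
        _ ≤ ‖M e₀ - A e₀‖ := lp.norm_apply_le_norm two_ne_zero _ _
        _ ≤ ε / (C + 1) := le_of_lt he
  -- main estimate
  have h1 : ‖A f v - M f v‖ < ε / (C + 1) := by
    calc ‖A f v - M f v‖ = ‖(M f - A f) v‖ := by
          rw [lp.coeFn_sub, Pi.sub_apply, norm_sub_rev]
      _ ≤ ‖M f - A f‖ := lp.norm_apply_le_norm two_ne_zero _ _
      _ < ε / (C + 1) := hf
  have h2 : ‖Gamma T lamC ψ (⇑f) v - Gamma T lamC φ (⇑f) v‖ ≤ (ε / (C + 1)) * C := by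
    unfold Gamma
    rw [← Finset.sum_sub_distrib]
    calc ‖∑ k ∈ Finset.range (T.depth v + 1),
          (wProd T lamC v k * ψ k * f (T.par^[k] v) -
           wProd T lamC v k * φ k * f (T.par^[k] v))‖
        ≤ ∑ k ∈ Finset.range (T.depth v + 1),
          ‖wProd T lamC v k * ψ k * f (T.par^[k] v) -
           wProd T lamC v k * φ k * f (T.par^[k] v)‖ := norm_sum_le _ _
      _ ≤ ∑ k ∈ Finset.range (T.depth v + 1),
          (ε / (C + 1)) * (‖wProd T lamC v k * f (T.par^[k] v)‖ / ‖w k‖) := by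
          refine Finset.sum_le_sum fun k _ => ?_
          have : wProd T lamC v k * ψ k * f (T.par^[k] v) -
              wProd T lamC v k * φ k * f (T.par^[k] v) =
              (wProd T lamC v k * f (T.par^[k] v)) * (ψ k - φ k) := by ring
          rw [this, norm_mul]
          calc ‖wProd T lamC v k * f (T.par^[k] v)‖ * ‖ψ k - φ k‖
              ≤ ‖wProd T lamC v k * f (T.par^[k] v)‖ * ((ε / (C + 1)) / ‖w k‖) :=
                mul_le_mul_of_nonneg_left (hψφ k) (norm_nonneg _)
            _ = (ε / (C + 1)) * (‖wProd T lamC v k * f (T.par^[k] v)‖ / ‖w k‖) := by ring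
      _ = (ε / (C + 1)) * C := by rw [hC, Finset.mul_sum]
  have hMfv : M f v = Gamma T lamC ψ (⇑f) v := hM f v
  have hlt : ε < ε / (C + 1) + (ε / (C + 1)) * C := by
    calc ε = ‖(A f v - M f v) + (Gamma T lamC ψ (⇑f) v - Gamma T lamC φ (⇑f) v)‖ := by
          rw [hε]; congr 1; rw [hMfv]; ring
      _ ≤ ‖A f v - M f v‖ + ‖Gamma T lamC ψ (⇑f) v - Gamma T lamC φ (⇑f) v‖ := norm_add_le _ _
      _ < ε / (C + 1) + (ε / (C + 1)) * C := add_lt_add_of_lt_of_le h1 h2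
  have heq : ε / (C + 1) + (ε / (C + 1)) * C = ε := by field_simp; ring
  linarith
end
end

section
/- Lat ℳ(λ) = Lat {M_φ̂ : φ̂ ∈ 𝓜₀(λ)}; that is, a closed subspace of ℓ²(V) is invariant under every bounded multiplication operator M_φ̂ with φ̂ ∈ 𝓜(λ) if and only if it is invariant under every M_φ̂ with finitely supported φ̂. -/
open Filter Finset Classical

set_option linter.unusedVariables false
open scoped ComplexConjugate ENNReal

noncomputable section
attribute [local instance] Classical.propDecidable

variable {V : Type*}

lemma depth_iter (T : DirTree V) (v : V) (n : ℕ) : T.depth (T.par^[n] v) = T.depth v - n := by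
  induction n with
  | zero => simp
  | succ n ih =>
    rw [Function.iterate_succ_apply']
    by_cases h : T.par^[n] v = T.root
    · have h0 : T.depth (T.par^[n] v) = 0 := (T.depth_eq_zero _).2 h
      rw [h, T.par_root, (T.depth_eq_zero _).2 rfl]
      omega
    · have := T.depth_par _ h
      omega

lemma iter_eq_root_iff (T : DirTree V) (v : V) (n : ℕ) :
    T.par^[n] v = T.root ↔ T.depth v ≤ n := by
  constructor
  · intro h
    by_contra hc
    push_neg at hc
    have := depth_iter T v n
    rw [(T.depth_eq_zero _).2 h] at this
    omega
  · intro h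
    have := depth_iter T v n
    have h0 : T.depth (T.par^[n] v) = 0 := by omega
    exact (T.depth_eq_zero _).1 h0

-- S^k formula
lemma spow_apply (T : DirTree V) (lam : V → ℝ)
    (S : lp (fun _ : V => ℂ) 2 →L[ℂ] lp (fun _ : V => ℂ) 2) (hS : IsShift T lam S)
    (k : ℕ) (f : lp (fun _ : V => ℂ) 2) (v : V) :
    (S ^ k) f v = if T.depth v < k then 0
      else wProd T (fun u => (lam u : ℂ)) v k * f (T.par^[k] v) := by
  induction k generalizing f with
  | zero => simp [wProd]
  | succ k ih =>
    have : S ^ (k + 1) = S ^ k * S := pow_succ S k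
    rw [this, ContinuousLinearMap.mul_apply, ih (S f)]
    by_cases h : T.depth v < k
    · rw [if_pos h, if_pos (by omega)]
    · rw [if_neg h]
      by_cases h2 : T.depth v < k + 1
      · have hroot : T.par^[k] v = T.root := (iter_eq_root_iff T v k).2 (by omega)
        rw [hS (f) (T.par^[k] v), if_pos hroot, if_pos h2, mul_zero]
      · have hnroot : T.par^[k] v ≠ T.root := by
          intro hr
          exact absurd ((iter_eq_root_iff T v k).1 hr) (by omega)
        rw [hS f (T.par^[k] v), if_neg hnroot, if_neg h2]
        have : T.par (T.par^[k] v) = T.par^[k+1] v := (Function.iterate_succ_apply' T.par k v).symm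
        rw [this]
        simp only [wProd, Finset.prod_range_succ]
        ring

-- delta multiplier
lemma multop_delta (T : DirTree V) (lam : V → ℝ)
    (S : lp (fun _ : V => ℂ) 2 →L[ℂ] lp (fun _ : V => ℂ) 2) (hS : IsShift T lam S) (k : ℕ) :
    IsMultOp T lam (fun m => if m = k then 1 else 0) (S ^ k) := by
  intro f v
  rw [spow_apply T lam S hS k f v, Gamma]
  have h1 : ∀ m ∈ Finset.range (T.depth v + 1),
      wProd T (fun u => (lam u : ℂ)) v m * (if m = k then (1:ℂ) else 0) * f (T.par^[m] v)
      = if m = k then wProd T (fun u => (lam u : ℂ)) v m * f (T.par^[m] v) else 0 := by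
    intro m _
    by_cases h : m = k <;> simp [h]
  rw [Finset.sum_congr rfl h1, Finset.sum_ite_eq' (Finset.range (T.depth v + 1)) k]
  by_cases hk : T.depth v < k
  · rw [if_pos hk, if_neg (fun hmem => absurd (Finset.mem_range.1 hmem) (by omega))]
  · rw [if_neg hk, if_pos (Finset.mem_range.2 (by omega))]

instance : Fact ((0:ℝ) < 1) := ⟨one_pos⟩

lemma memℓp_of_le {x : lp (fun _ : V => ℂ) 2} {y : V → ℂ}
    (h : ∀ v, ‖y v‖ ≤ ‖x v‖) : Memℓp y 2 := by
  apply memℓp_gen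
  have hs := (lp.memℓp x).summable (p := 2) (by norm_num)
  apply hs.of_nonneg_of_le (fun v => Real.rpow_nonneg (norm_nonneg _) _)
  intro v
  exact Real.rpow_le_rpow (norm_nonneg _) (h v) (by norm_num)

lemma lp_norm_congr (x : lp (fun _ : V => ℂ) 2) (y : lp (fun _ : V => ℂ) 2)
    (h : ∀ v, ‖y v‖ = ‖x v‖) : ‖y‖ = ‖x‖ := by
  have h2 : 0 < (2:ℝ≥0∞).toReal := by norm_num
  rw [lp.norm_eq_tsum_rpow h2 x, lp.norm_eq_tsum_rpow h2 y]
  congr 1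
  exact tsum_congr fun v => by rw [h]

lemma norm_fourier_apply (n : ℤ) (θ : AddCircle (1:ℝ)) : ‖(fourier n θ : ℂ)‖ = 1 :=
  Circle.norm_coe _

/-- modulation operator -/
def modf (T : DirTree V) (θ : AddCircle (1:ℝ)) (x : lp (fun _ : V => ℂ) 2) :
    lp (fun _ : V => ℂ) 2 :=
  ⟨fun v => fourier (-(T.depth v : ℤ)) θ * x v, by
    apply memℓp_of_le (x := x)
    intro v
    rw [norm_mul, norm_fourier_apply, one_mul]⟩

@[simp] lemma modf_apply (T : DirTree V) (θ : AddCircle (1:ℝ)) (x : lp (fun _ : V => ℂ) 2)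
    (v : V) : (modf T θ x) v = fourier (-(T.depth v : ℤ)) θ * x v := rfl

lemma norm_modf (T : DirTree V) (θ : AddCircle (1:ℝ)) (x : lp (fun _ : V => ℂ) 2) :
    ‖modf T θ x‖ = ‖x‖ := by
  apply lp_norm_congr
  intro v
  rw [modf_apply, norm_mul, norm_fourier_apply, one_mul]

lemma modf_zero (T : DirTree V) (x : lp (fun _ : V => ℂ) 2) : modf T 0 x = x := by
  apply lp.ext
  funext v
  rw [modf_apply]
  have : (fourier (-(T.depth v : ℤ)) (0 : AddCircle (1:ℝ)) : ℂ) = 1 := by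
    rw [fourier_apply, smul_zero, AddCircle.toCircle_zero, Circle.coe_one]
  rw [this, one_mul]

open MeasureTheory AddCircle in
lemma integrable_cont {u : AddCircle (1:ℝ) → ℂ} (hu : Continuous u) :
    Integrable u haarAddCircle :=
  hu.integrable_of_hasCompactSupport (HasCompactSupport.of_compactSpace u)

open MeasureTheory AddCircle in
lemma fourierCoeff_fourier' (m j : ℤ) :
    fourierCoeff (⇑(fourier m) : AddCircle (1:ℝ) → ℂ) j = if j = m then 1 else 0 := by
  have h0 := (orthonormal_iff_ite.mp (orthonormal_fourier (T := 1))) j m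
  rw [ContinuousMap.inner_toLp] at h0
  rw [fourierCoeff, ← h0]
  congr 1
  funext t
  rw [smul_eq_mul, fourier_neg, mul_comm]

open MeasureTheory AddCircle in
lemma fourierCoeff_finset_sum {ι : Type*} (s : Finset ι) (F : ι → AddCircle (1:ℝ) → ℂ)
    (hF : ∀ i ∈ s, Continuous (F i)) (j : ℤ) :
    fourierCoeff (fun θ => ∑ i ∈ s, F i θ) j = ∑ i ∈ s, fourierCoeff (F i) j := by
  simp only [fourierCoeff, Finset.smul_sum]
  rw [integral_finset_sum]
  intro i hi
  exact integrable_cont ((map_continuous (fourier (-j))).smul (hF i hi))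

open MeasureTheory AddCircle in
lemma fourierCoeff_sub {u w : AddCircle (1:ℝ) → ℂ} (hu : Continuous u) (hw : Continuous w)
    (j : ℤ) :
    fourierCoeff (fun θ => u θ - w θ) j = fourierCoeff u j - fourierCoeff w j := by
  simp only [fourierCoeff, smul_sub]
  exact integral_sub (integrable_cont ((map_continuous (fourier (-j))).smul hu))
    (integrable_cont ((map_continuous (fourier (-j))).smul hw))

open MeasureTheory AddCircle in
lemma norm_fourierCoeff_le {u : AddCircle (1:ℝ) → ℂ} {C : ℝ}
    (hC : ∀ θ, ‖u θ‖ ≤ C) (j : ℤ) : ‖fourierCoeff u j‖ ≤ C := by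
  rw [fourierCoeff]
  have h1 : ∀ᵐ θ ∂(haarAddCircle : Measure (AddCircle (1:ℝ))),
      ‖(fourier (-j) θ : ℂ) • u θ‖ ≤ C := by
    filter_upwards with θ
    rw [norm_smul, norm_fourier_apply, one_mul]
    exact hC θ
  have := norm_integral_le_of_norm_le_const (μ := (haarAddCircle : Measure (AddCircle (1:ℝ)))) h1
  simpa [measure_univ] using this

lemma hF_term (T : DirTree V) (lam : V → ℝ) (φ : ℕ → ℂ)
    (M : lp (fun _ : V => ℂ) 2 →L[ℂ] lp (fun _ : V => ℂ) 2) (hM : IsMultOp T lam φ M)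
    (f g : lp (fun _ : V => ℂ) 2) (θ : AddCircle (1:ℝ)) (v : V) :
    (starRingEnd ℂ) ((modf T θ g) v) * (M (modf T θ f)) v
      = ∑ m ∈ Finset.range (T.depth v + 1),
          ((starRingEnd ℂ) (g v) * (wProd T (fun u => (lam u : ℂ)) v m * φ m * f (T.par^[m] v)))
            * fourier (m : ℤ) θ := by
  rw [hM (modf T θ f) v, Gamma, Finset.mul_sum]
  refine Finset.sum_congr rfl fun m hm => ?_
  have hm' : m ≤ T.depth v := by
    have := Finset.mem_range.1 hm; omega
  have hdd : T.depth (T.par^[m] v) = T.depth v - m := depth_iter T v m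
  simp only [modf_apply, map_mul, hdd]
  have hconj : (starRingEnd ℂ) ((fourier (-(T.depth v : ℤ)) θ : ℂ))
      = fourier ((T.depth v : ℤ)) θ := by
    rw [fourier_neg, Complex.conj_conj]
  rw [hconj]
  have hkey : (fourier ((T.depth v : ℤ)) θ : ℂ) * fourier (-((T.depth v - m : ℕ) : ℤ)) θ
      = fourier (m : ℤ) θ := by
    rw [← fourier_add]
    congr 1
    push_cast [Nat.cast_sub hm']
    ring_nf
  linear_combination ((starRingEnd ℂ) (g v)
    * (wProd T (fun u => (lam u : ℂ)) v m * φ m * f (T.par^[m] v))) * hkey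

lemma tsum_ite_compl {α : Type*} {E : Type*} [AddCommGroup E] [TopologicalSpace E]
    [IsTopologicalAddGroup E] [T2Space E] (F : Finset α) (a : α → E) (ha : Summable a) :
    (∑' v, if v ∈ F then 0 else a v) = (∑' v, a v) - ∑ v ∈ F, a v := by
  classical
  have hin : Summable (fun v => if v ∈ F then a v else 0) :=
    summable_of_ne_finset_zero (s := F) (fun b hb => if_neg hb)
  calc (∑' v, if v ∈ F then 0 else a v)
      = ∑' v, (a v - if v ∈ F then a v else 0) := by
        apply tsum_congr; intro v; by_cases hv : v ∈ F <;> simp [hv]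
    _ = (∑' v, a v) - (∑' v, if v ∈ F then a v else 0) := Summable.tsum_sub ha hin
    _ = (∑' v, a v) - ∑ v ∈ F, a v := by
        rw [tsum_eq_sum (s := F) (fun b hb => if_neg hb)]
        congr 1
        exact Finset.sum_congr rfl fun b hb => if_pos hb

local notation "⟪" x ", " y "⟫" => @inner ℂ _ _ x y

set_option maxHeartbeats 1000000 in
open MeasureTheory AddCircle in
lemma key (T : DirTree V) [Countable V] [Nonempty V] (lam : V → ℝ)
    (S M : lp (fun _ : V => ℂ) 2 →L[ℂ] lp (fun _ : V => ℂ) 2)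
    (hS : IsShift T lam S) (φ : ℕ → ℂ) (hM : IsMultOp T lam φ M)
    (f g : lp (fun _ : V => ℂ) 2)
    (hg : ∀ k : ℕ, ⟪g, (S ^ k) f⟫ = 0) : ⟪g, M f⟫ = 0 := by
  classical
  obtain ⟨e, he⟩ := exists_surjective_nat V
  set Fn : ℕ → Finset V := fun n => (Finset.range (n + 1)).image e with hFnd
  have hFmono : Monotone Fn := fun a b hab =>
    Finset.image_subset_image (Finset.range_subset_range.2 (by omega))
  have hFcov : ∀ v : V, ∃ n, v ∈ Fn n := by
    intro v
    obtain ⟨n, rfl⟩ := he v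
    exact ⟨n, Finset.mem_image_of_mem e (Finset.mem_range.2 (by omega))⟩
  have hFten : Tendsto Fn atTop atTop := hFmono.tendsto_atTop_finset hFcov
  -- tails of g
  have gtail_mem : ∀ F : Finset V, Memℓp (fun v => if v ∈ F then 0 else g v) 2 := by
    intro F
    apply memℓp_of_le (x := g)
    intro v
    split
    · simp
    · exact le_refl _
  set gt : Finset V → lp (fun _ : V => ℂ) 2 :=
    fun F => ⟨fun v => if v ∈ F then 0 else g v, gtail_mem F⟩ with hgtd
  have gt_apply : ∀ F v, (gt F) v = if v ∈ F then 0 else g v := fun F v => rfl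
  -- tail norms tend to zero
  have hp2 : (0:ℝ) < (2:ℝ≥0∞).toReal := by norm_num
  have htail0 : Tendsto (fun n => ‖gt (Fn n)‖) atTop (nhds 0) := by
    set b : V → ℝ := fun v => ‖g v‖ ^ (2:ℝ≥0∞).toReal with hbd
    have hb : Summable b := (lp.memℓp g).summable hp2
    have hnorm : ∀ F : Finset V,
        ‖gt F‖ = ((∑' v, b v) - ∑ v ∈ F, b v) ^ (1 / (2:ℝ≥0∞).toReal) := by
      intro F
      rw [lp.norm_eq_tsum_rpow hp2, ← tsum_ite_compl F b hb]
      congr 1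
      apply tsum_congr
      intro v
      rw [gt_apply]
      by_cases hv : v ∈ F
      · simp only [hv, if_true, norm_zero]
        rw [Real.zero_rpow (by norm_num : (2:ℝ≥0∞).toReal ≠ 0)]
      · simp only [hv, if_false, hbd]
    have hsum : Tendsto (fun n => (∑' v, b v) - ∑ v ∈ Fn n, b v) atTop (nhds 0) := by
      have h3 := (tendsto_const_nhds (x := ∑' v, b v) (f := atTop (α := ℕ))).sub
        (hb.hasSum.comp hFten)
      simpa using h3
    have h4 := hsum.rpow_const (p := 1 / (2:ℝ≥0∞).toReal) (Or.inr (by norm_num))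
    rw [Real.zero_rpow (by norm_num : 1 / (2:ℝ≥0∞).toReal ≠ 0)] at h4
    simp only [hnorm]
    exact h4
  -- the function h and its approximants
  set h : AddCircle (1:ℝ) → ℂ := fun θ => ⟪modf T θ g, M (modf T θ f)⟫ with hhd
  set hP : Finset V → AddCircle (1:ℝ) → ℂ := fun F θ =>
    ∑ v ∈ F, ∑ m ∈ Finset.range (T.depth v + 1),
      ((starRingEnd ℂ) (g v) * (wProd T (fun u => (lam u : ℂ)) v m * φ m * f (T.par^[m] v)))
        * fourier (m : ℤ) θ with hPd
  have hPsum : ∀ F θ, hP F θ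
      = ∑ v ∈ F, (starRingEnd ℂ) ((modf T θ g) v) * (M (modf T θ f)) v :=
    fun F θ => (Finset.sum_congr rfl fun v _ => (hF_term T lam φ M hM f g θ v)).symm
  have hPcont : ∀ F, Continuous (hP F) := by
    intro F
    apply continuous_finset_sum
    intro v _
    apply continuous_finset_sum
    intro m _
    exact continuous_const.mul (map_continuous (fourier (m:ℤ)))
  -- the uniform bound
  have hbound : ∀ (F : Finset V) θ, ‖h θ - hP F θ‖ ≤ ‖gt F‖ * (‖M‖ * ‖f‖) := by
    intro F θ
    have hsummand : Summable
        (fun v => (starRingEnd ℂ) ((modf T θ g) v) * (M (modf T θ f)) v) := by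
      have := lp.summable_inner (𝕜 := ℂ) (modf T θ g) (M (modf T θ f))
      simpa [RCLike.inner_apply, mul_comm] using this
    have hinner : h θ = ∑' v, (starRingEnd ℂ) ((modf T θ g) v) * (M (modf T θ f)) v := by
      have e1 : h θ = ⟪modf T θ g, M (modf T θ f)⟫ := rfl
      rw [e1, lp.inner_eq_tsum]
      exact tsum_congr fun v => by rw [RCLike.inner_apply, mul_comm]
    have hdiff : h θ - hP F θ = ⟪modf T θ (gt F), M (modf T θ f)⟫ := by
      rw [hinner, hPsum F θ, lp.inner_eq_tsum]
      have hrhs : ∀ v, ⟪(modf T θ (gt F)) v, (M (modf T θ f)) v⟫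
          = if v ∈ F then 0 else (starRingEnd ℂ) ((modf T θ g) v) * (M (modf T θ f)) v := by
        intro v
        rw [RCLike.inner_apply, modf_apply, gt_apply]
        by_cases hv : v ∈ F
        · simp [hv]
        · simp [hv, modf_apply]
          ring
      rw [tsum_congr hrhs, tsum_ite_compl F _ hsummand]
    rw [hdiff]
    calc ‖⟪modf T θ (gt F), M (modf T θ f)⟫‖
        ≤ ‖modf T θ (gt F)‖ * ‖M (modf T θ f)‖ := norm_inner_le_norm _ _
    _ ≤ ‖gt F‖ * (‖M‖ * ‖f‖) := by
        rw [norm_modf]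
        apply mul_le_mul_of_nonneg_left _ (norm_nonneg _)
        calc ‖M (modf T θ f)‖ ≤ ‖M‖ * ‖modf T θ f‖ := M.le_opNorm _
        _ = ‖M‖ * ‖f‖ := by rw [norm_modf]
  -- uniform convergence and continuity of h
  have hunif : TendstoUniformly (fun n θ => hP (Fn n) θ) h atTop := by
    rw [Metric.tendstoUniformly_iff]
    intro ε hε
    have hC : Tendsto (fun n => ‖gt (Fn n)‖ * (‖M‖ * ‖f‖)) atTop (nhds 0) := by
      have := htail0.mul_const (‖M‖ * ‖f‖)
      rwa [zero_mul] at this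
    filter_upwards [hC.eventually (gt_mem_nhds hε)] with n hn θ
    rw [dist_eq_norm]
    exact lt_of_le_of_lt (hbound (Fn n) θ) hn
  have hcont : Continuous h := hunif.continuous (Frequently.of_forall fun n => hPcont (Fn n))
  -- Fourier coefficients of the approximants
  have hcoeffP : ∀ (F : Finset V) (j : ℤ), fourierCoeff (hP F) j
      = ∑ v ∈ F, ∑ m ∈ Finset.range (T.depth v + 1),
          ((starRingEnd ℂ) (g v) * (wProd T (fun u => (lam u : ℂ)) v m * φ m * f (T.par^[m] v)))
            * (if j = (m : ℤ) then 1 else 0) := by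
    intro F j
    rw [hPd]
    rw [fourierCoeff_finset_sum F
      (fun v θ => ∑ m ∈ Finset.range (T.depth v + 1),
        ((starRingEnd ℂ) (g v) * (wProd T (fun u => (lam u : ℂ)) v m * φ m * f (T.par^[m] v)))
          * fourier (m : ℤ) θ)
      (fun v _ => continuous_finset_sum _
        (fun m _ => continuous_const.mul (map_continuous (fourier (m:ℤ))))) j]
    refine Finset.sum_congr rfl fun v _ => ?_
    rw [fourierCoeff_finset_sum (Finset.range (T.depth v + 1))
      (fun m θ => ((starRingEnd ℂ) (g v)
        * (wProd T (fun u => (lam u : ℂ)) v m * φ m * f (T.par^[m] v))) * fourier (m : ℤ) θ)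
      (fun m _ => continuous_const.mul (map_continuous (fourier (m:ℤ)))) j]
    refine Finset.sum_congr rfl fun m _ => ?_
    rw [fourierCoeff.const_mul (fun θ => (fourier (m:ℤ)) θ)
      ((starRingEnd ℂ) (g v) * (wProd T (fun u => (lam u : ℂ)) v m * φ m * f (T.par^[m] v))) j,
      fourierCoeff_fourier']
  -- convergence of coefficients to those of h
  have hlim1 : ∀ j : ℤ, Tendsto (fun n => fourierCoeff (hP (Fn n)) j) atTop
      (nhds (fourierCoeff h j)) := by
    intro j
    rw [← tendsto_sub_nhds_zero_iff]
    refine squeeze_zero_norm (fun n => ?_) (a := fun n => ‖gt (Fn n)‖ * (‖M‖ * ‖f‖))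
      (by have := htail0.mul_const (‖M‖ * ‖f‖); rwa [zero_mul] at this)
    have heq : fourierCoeff (hP (Fn n)) j - fourierCoeff h j
        = fourierCoeff (fun θ => hP (Fn n) θ - h θ) j :=
      (fourierCoeff_sub (hPcont (Fn n)) hcont j).symm
    rw [heq]
    apply norm_fourierCoeff_le
    intro θ
    rw [norm_sub_rev]
    exact hbound (Fn n) θ
  -- all Fourier coefficients of h vanish
  have hco : ∀ j : ℤ, fourierCoeff h j = 0 := by
    intro j
    rcases le_or_gt 0 j with hj | hj
    · lift j to ℕ using hj
      have hformula : ∀ F : Finset V, fourierCoeff (hP F) (j : ℤ)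
          = φ j * ∑ v ∈ F, (starRingEnd ℂ) (g v) * ((S ^ j) f v) := by
        intro F
        rw [hcoeffP F (j : ℤ), Finset.mul_sum]
        refine Finset.sum_congr rfl fun v _ => ?_
        have hstep : ∀ m ∈ Finset.range (T.depth v + 1),
            ((starRingEnd ℂ) (g v)
              * (wProd T (fun u => (lam u : ℂ)) v m * φ m * f (T.par^[m] v)))
              * (if (j : ℤ) = (m : ℤ) then 1 else 0)
            = if m = j then ((starRingEnd ℂ) (g v)
              * (wProd T (fun u => (lam u : ℂ)) v m * φ m * f (T.par^[m] v))) else 0 := by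
          intro m _
          by_cases hmj : m = j
          · rw [if_pos hmj, if_pos (by exact_mod_cast hmj.symm), mul_one]
          · rw [if_neg (fun hc => hmj (by exact_mod_cast hc.symm)), if_neg hmj, mul_zero]
        rw [Finset.sum_congr rfl hstep, Finset.sum_ite_eq' (Finset.range (T.depth v + 1)) j]
        rw [spow_apply T lam S hS j f v]
        by_cases hk : T.depth v < j
        · rw [if_neg (fun hmem => absurd (Finset.mem_range.1 hmem) (by omega)), if_pos hk]
          ring
        · rw [if_pos (Finset.mem_range.2 (by omega)), if_neg hk]
          ring
      have hSk : HasSum (fun v => (starRingEnd ℂ) (g v) * ((S ^ j) f v)) 0 := by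
        have h1 := lp.hasSum_inner (𝕜 := ℂ) g ((S ^ j) f)
        rw [hg j] at h1
        have h6 : (fun v => ⟪g v, ((S ^ j) f) v⟫)
            = fun v => (starRingEnd ℂ) (g v) * ((S ^ j) f v) := by
          funext v; rw [RCLike.inner_apply, mul_comm]
        rwa [h6] at h1
      have ht2 : Tendsto (fun n => fourierCoeff (hP (Fn n)) (j : ℤ)) atTop (nhds 0) := by
        have h4 : Tendsto (fun n => ∑ v ∈ Fn n, (starRingEnd ℂ) (g v) * ((S ^ j) f v))
            atTop (nhds 0) := hSk.comp hFten
        have h5 := h4.const_mul (φ j)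
        rw [mul_zero] at h5
        simpa only [hformula] using h5
      exact tendsto_nhds_unique (hlim1 (j : ℤ)) ht2
    · have hzero : ∀ n, fourierCoeff (hP (Fn n)) j = 0 := by
        intro n
        rw [hcoeffP]
        apply Finset.sum_eq_zero
        intro v _
        apply Finset.sum_eq_zero
        intro m _
        rw [if_neg (by omega), mul_zero]
      have h7 : Tendsto (fun n => fourierCoeff (hP (Fn n)) j) atTop (nhds 0) := by
        simp only [hzero]
        exact tendsto_const_nhds
      exact tendsto_nhds_unique (hlim1 j) h7
  -- h vanishes identically
  have hzero : h = 0 := by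
    set Hc : C(AddCircle (1:ℝ), ℂ) := ⟨h, hcont⟩ with hHc
    have hae : (↑(ContinuousMap.toLp (E := ℂ) 2 haarAddCircle ℂ Hc) : AddCircle (1:ℝ) → ℂ)
        =ᵐ[haarAddCircle] h := ContinuousMap.coeFn_toLp _ _
    have hLp : (ContinuousMap.toLp (E := ℂ) 2 haarAddCircle ℂ Hc) = 0 := by
      have hrepr : fourierBasis.repr (ContinuousMap.toLp (E := ℂ) 2 haarAddCircle ℂ Hc) = 0 := by
        apply lp.ext
        funext j
        rw [lp.coeFn_zero, Pi.zero_apply, fourierBasis_repr]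
        have h8 : fourierCoeff (↑(ContinuousMap.toLp (E := ℂ) 2 haarAddCircle ℂ Hc)
            : AddCircle (1:ℝ) → ℂ) j = fourierCoeff h j := by
          unfold fourierCoeff
          apply integral_congr_ae
          filter_upwards [hae] with θ hθ
          rw [hθ]
        rw [h8, hco j]
      have hinj := (fourierBasis (T := (1:ℝ))).repr.injective
      apply hinj
      rw [hrepr, map_zero]
    have hae0 : h =ᵐ[haarAddCircle] (0 : AddCircle (1:ℝ) → ℂ) := by
      refine hae.symm.trans ?_
      rw [hLp]
      exact Lp.coeFn_zero ℂ 2 haarAddCircle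
    exact (hcont.ae_eq_iff_eq haarAddCircle continuous_const).mp hae0
  -- evaluate at zero
  have h0 : h 0 = 0 := by rw [hzero]; rfl
  have h9 : h 0 = ⟪modf T 0 g, M (modf T 0 f)⟫ := rfl
  rw [h9, modf_zero, modf_zero] at h0
  exact h0


/-- Proposition, first part: `Lat ℳ(λ) = Lat {M_φ : φ ∈ 𝓜₀(λ)}`:
a closed subspace is invariant under all bounded multiplication operators iff it is
invariant under all multiplication operators with finitely supported symbols. -/
theorem stmt7 [Countable V] [Infinite V] (T : DirTree V) (hTl : T.Leafless)
    (lam : V → ℝ) (hlam : ∀ v, v ≠ T.root → 0 < lam v)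
    (S : lp (fun _ : V => ℂ) 2 →L[ℂ] lp (fun _ : V => ℂ) 2) (hS : IsShift T lam S) :
    ∀ K : Submodule ℂ (lp (fun _ : V => ℂ) 2), IsClosed (K : Set (lp (fun _ : V => ℂ) 2)) →
      ((∀ φ : ℕ → ℂ, ∀ M : lp (fun _ : V => ℂ) 2 →L[ℂ] lp (fun _ : V => ℂ) 2,
          IsMultOp T lam φ M → ∀ f ∈ K, M f ∈ K) ↔
        (∀ φ : ℕ → ℂ, ∀ M : lp (fun _ : V => ℂ) 2 →L[ℂ] lp (fun _ : V => ℂ) 2,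
          (Function.support φ).Finite → IsMultOp T lam φ M → ∀ f ∈ K, M f ∈ K)) := by
  intro K hK
  constructor
  · intro H φ M hfin hM f hf
    exact H φ M hM f hf
  · intro H φ M hM f hf
    haveI : CompleteSpace K := hK.completeSpace_coe
    have hinv : ∀ k : ℕ, (S ^ k) f ∈ K := by
      intro k
      refine H (fun m => if m = k then 1 else 0) (S ^ k) ?_ (multop_delta T lam S hS k) f hf
      apply Set.Finite.subset (Set.finite_singleton k)
      intro m hm
      rcases eq_or_ne m k with hh | hh
      · exact hh ▸ rfl
      · exact absurd (if_neg hh) (Function.mem_support.mp hm)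
    rw [← Submodule.orthogonal_orthogonal K, Submodule.mem_orthogonal]
    intro u hu
    apply key T lam S M hS φ hM f u
    intro k
    exact (Submodule.mem_orthogonal' K u).1 hu _ (hinv k)
end
end

section
/- Alg Lat ℳ(λ) consists exactly of those bounded operators A on ℓ²(V) with the property that for all f, g ∈ ℓ²(V): if ⟨M_φ̂ f, g⟩ = 0 for every φ̂ ∈ 𝓜₀(λ), then ⟨A f, g⟩ = 0. -/
open Filter Finset Classical

set_option linter.unusedVariables false
open scoped ComplexConjugate ENNReal

noncomputable section
attribute [local instance] Classical.propDecidable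

variable {V : Type*}

namespace Stmt8Aux

open scoped NNReal

lemma wProd_succ' (T : DirTree V) (lam : V → ℂ) (v : V) (k : ℕ) :
    wProd T lam v (k + 1) = lam v * wProd T lam (T.par v) k := by
  unfold wProd
  rw [Finset.prod_range_succ']
  simp only [Function.iterate_succ_apply, Function.iterate_zero_apply]
  ring

lemma wProd_add (T : DirTree V) (lam : V → ℂ) (v : V) (k j : ℕ) :
    wProd T lam v (k + j) = wProd T lam v k * wProd T lam (T.par^[k] v) j := by
  unfold wProd
  rw [Finset.prod_range_add]
  congr 1
  refine Finset.prod_congr rfl fun i _ => ?_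
  rw [add_comm k i, Function.iterate_add_apply]

lemma depth_iter (T : DirTree V) : ∀ (k : ℕ) (v : V), k ≤ T.depth v →
    T.depth (T.par^[k] v) + k = T.depth v := by
  intro k
  induction k with
  | zero => intro v _; simp
  | succ k ih =>
    intro v h
    have hvroot : v ≠ T.root := by
      intro hv
      have := (T.depth_eq_zero v).2 hv
      omega
    have hd := T.depth_par v hvroot
    have h' : k ≤ T.depth (T.par v) := by omega
    have := ih (T.par v) h'
    rw [Function.iterate_succ_apply]
    omega

lemma Spow (T : DirTree V) (lam : V → ℝ)
    (S : lp (fun _ : V => ℂ) 2 →L[ℂ] lp (fun _ : V => ℂ) 2) (hS : IsShift T lam S) :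
    ∀ (k : ℕ) (f : lp (fun _ : V => ℂ) 2) (v : V),
      (S ^ k) f v = if k ≤ T.depth v
        then wProd T (fun u => ((lam u : ℝ) : ℂ)) v k * f (T.par^[k] v) else 0 := by
  intro k
  induction k with
  | zero =>
    intro f v
    rw [pow_zero, ContinuousLinearMap.one_apply, if_pos (Nat.zero_le _)]
    simp [wProd]
  | succ k ih =>
    intro f v
    rw [pow_succ', ContinuousLinearMap.mul_apply, hS ((S ^ k) f) v]
    by_cases hv : v = T.root
    · subst hv
      have h0 : T.depth T.root = 0 := (T.depth_eq_zero _).2 rfl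
      rw [if_pos rfl, if_neg (by omega)]
    · rw [if_neg hv, ih f (T.par v)]
      have hd := T.depth_par v hv
      by_cases hk : k ≤ T.depth (T.par v)
      · rw [if_pos hk, if_pos (by omega), wProd_succ', Function.iterate_succ_apply, mul_assoc]
      · rw [if_neg hk, if_neg (by omega), mul_zero]

lemma isMultOp_pow (T : DirTree V) (lam : V → ℝ)
    (S : lp (fun _ : V => ℂ) 2 →L[ℂ] lp (fun _ : V => ℂ) 2) (hS : IsShift T lam S) (k : ℕ) :
    IsMultOp T lam (fun j => if j = k then 1 else 0) (S ^ k) := by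
  intro f v
  rw [Spow T lam S hS k f v]
  unfold Gamma
  have : ∀ j : ℕ, wProd T (fun u => ((lam u : ℝ) : ℂ)) v j * (if j = k then (1:ℂ) else 0) *
      f (T.par^[j] v)
      = if j = k then wProd T (fun u => ((lam u : ℝ) : ℂ)) v j * f (T.par^[j] v) else 0 := by
    intro j
    by_cases h : j = k <;> simp [h]
  rw [Finset.sum_congr rfl fun j _ => this j, Finset.sum_ite_eq' (Finset.range (T.depth v + 1))]
  by_cases hk : k ≤ T.depth v
  · rw [if_pos hk, if_pos (Finset.mem_range.2 (by omega))]
  · rw [if_neg hk, if_neg (fun hc => hk (by have := Finset.mem_range.1 hc; omega))]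

lemma isMultOp_comp_pow (T : DirTree V) (lam : V → ℝ)
    (S : lp (fun _ : V => ℂ) 2 →L[ℂ] lp (fun _ : V => ℂ) 2) (hS : IsShift T lam S)
    {φ : ℕ → ℂ} {N : lp (fun _ : V => ℂ) 2 →L[ℂ] lp (fun _ : V => ℂ) 2}
    (hN : IsMultOp T lam φ N) (k : ℕ) :
    IsMultOp T lam (fun m => if k ≤ m then φ (m - k) else 0) ((S ^ k).comp N) := by
  intro f v
  have h1 : ((S ^ k).comp N) f v = (S ^ k) (N f) v := rfl
  rw [h1, Spow T lam S hS k (N f) v]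
  by_cases hk : k ≤ T.depth v
  · rw [if_pos hk, hN f (T.par^[k] v)]
    unfold Gamma
    have hdep : T.depth (T.par^[k] v) + k = T.depth v := depth_iter T k v hk
    have hsplit : T.depth v + 1 = k + (T.depth (T.par^[k] v) + 1) := by omega
    conv_rhs => rw [hsplit, Finset.sum_range_add]
    rw [Finset.mul_sum]
    have hzero : ∑ m ∈ Finset.range k,
        wProd T (fun u => ((lam u : ℝ) : ℂ)) v m * (if k ≤ m then φ (m - k) else 0) *
          f (T.par^[m] v) = 0 := by
      refine Finset.sum_eq_zero fun m hm => ?_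
      rw [Finset.mem_range] at hm
      have h0 : (if k ≤ m then φ (m - k) else 0) = 0 := if_neg (by omega)
      simp [h0]
    rw [hzero, zero_add]
    refine Finset.sum_congr rfl fun j _ => ?_
    have h2 : k ≤ k + j := Nat.le_add_right k j
    have h3 : T.par^[k + j] v = T.par^[j] (T.par^[k] v) := by
      rw [add_comm]; exact Function.iterate_add_apply _ j k v
    simp only [h2, if_true, Nat.add_sub_cancel_left]
    rw [wProd_add, h3]
    ring
  · rw [if_neg hk]
    unfold Gamma
    symm
    refine Finset.sum_eq_zero fun m hm => ?_
    rw [Finset.mem_range] at hm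
    have h0 : (if k ≤ m then φ (m - k) else 0) = 0 := if_neg (by omega)
    simp [h0]

section Crux

open MeasureTheory Topology

instance fact01 : Fact ((0:ℝ) < 1) := ⟨one_pos⟩

lemma norm_fourier' (m : ℤ) (θ : AddCircle (1:ℝ)) : ‖fourier m θ‖ = 1 := by
  rw [fourier_apply, Circle.norm_coe]

lemma memUfun (T : DirTree V) (θ : AddCircle (1:ℝ)) (h : lp (fun _ : V => ℂ) 2) :
    Memℓp (fun v => fourier (-(T.depth v : ℤ)) θ * h v) 2 := by
  apply memℓp_gen
  refine ((lp.memℓp h).summable (by norm_num)).congr fun v => ?_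
  rw [norm_mul, norm_fourier', one_mul]

def Umap (T : DirTree V) (θ : AddCircle (1:ℝ)) (h : lp (fun _ : V => ℂ) 2) :
    lp (fun _ : V => ℂ) 2 :=
  ⟨fun v => fourier (-(T.depth v : ℤ)) θ * h v, memUfun T θ h⟩

lemma Umap_apply (T : DirTree V) (θ : AddCircle (1:ℝ)) (h : lp (fun _ : V => ℂ) 2) (v : V) :
    (Umap T θ h) v = fourier (-(T.depth v : ℤ)) θ * h v := rfl

lemma Umap_zero (T : DirTree V) (h : lp (fun _ : V => ℂ) 2) : Umap T 0 h = h := by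
  apply lp.ext
  funext v
  rw [Umap_apply]
  simp

lemma norm_Umap (T : DirTree V) (θ : AddCircle (1:ℝ)) (h : lp (fun _ : V => ℂ) 2) :
    ‖Umap T θ h‖ = ‖h‖ := by
  rw [lp.norm_eq_tsum_rpow (by norm_num) (Umap T θ h), lp.norm_eq_tsum_rpow (by norm_num) h]
  congr 1
  refine tsum_congr fun v => ?_
  congr 1
  rw [Umap_apply, norm_mul, norm_fourier', one_mul]

lemma continuous_Umap (T : DirTree V) (h : lp (fun _ : V => ℂ) 2) :
    Continuous fun θ : AddCircle (1:ℝ) => Umap T θ h := by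
  rw [continuous_iff_seqContinuous]
  intro x θ0 hx
  rw [tendsto_iff_norm_sub_tendsto_zero]
  have ht : (0:ℝ) < (2 : ℝ≥0∞).toReal := by norm_num
  have htne : (2 : ℝ≥0∞).toReal ≠ 0 := by norm_num
  have key : Tendsto
      (fun n => ‖Umap T (x n) h - Umap T θ0 h‖ ^ (2 : ℝ≥0∞).toReal) atTop (𝓝 0) := by
    have heq : ∀ n, ‖Umap T (x n) h - Umap T θ0 h‖ ^ (2 : ℝ≥0∞).toReal
        = ∑' v, ‖(Umap T (x n) h - Umap T θ0 h) v‖ ^ (2 : ℝ≥0∞).toReal := fun n =>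
      lp.norm_rpow_eq_tsum ht _
    simp only [heq]
    have h0 : (0:ℝ) = ∑' v : V, (0:ℝ) := by rw [tsum_zero]
    rw [h0]
    refine tendsto_tsum_of_dominated_convergence
      (f := fun n v => ‖(Umap T (x n) h - Umap T θ0 h) v‖ ^ (2 : ℝ≥0∞).toReal)
      (bound := fun v => (2 * ‖h v‖) ^ (2 : ℝ≥0∞).toReal) ?_ ?_ ?_
    · refine ((lp.memℓp h).summable ht).mul_left (2 ^ (2 : ℝ≥0∞).toReal) |>.congr fun v => ?_
      rw [← Real.mul_rpow (by norm_num) (norm_nonneg _)]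
    · intro v
      have h1 : Tendsto (fun n => (Umap T (x n) h - Umap T θ0 h) v) atTop (𝓝 0) := by
        have h2 : ∀ n, (Umap T (x n) h - Umap T θ0 h) v
            = (fourier (-(T.depth v : ℤ)) (x n) - fourier (-(T.depth v : ℤ)) θ0) * h v := by
          intro n
          rw [lp.coeFn_sub, Pi.sub_apply, Umap_apply, Umap_apply, sub_mul]
        simp only [h2]
        have h3 : Tendsto (fun n => fourier (-(T.depth v : ℤ)) (x n)) atTop
            (𝓝 (fourier (-(T.depth v : ℤ)) θ0)) :=
          ((fourier _).continuous.tendsto θ0).comp hx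
        have := (h3.sub (tendsto_const_nhds (x := fourier (-(T.depth v : ℤ)) θ0))).mul_const
          ((h : ∀ _ : V, ℂ) v)
        simpa using this
      have h4 := (h1.norm.rpow_const (Or.inr ht.le))
      simpa [Real.zero_rpow htne] using h4
    · filter_upwards with n v
      have hb : ‖(Umap T (x n) h - Umap T θ0 h) v‖ ≤ 2 * ‖h v‖ := by
        rw [lp.coeFn_sub, Pi.sub_apply]
        refine (norm_sub_le _ _).trans ?_
        rw [Umap_apply, Umap_apply, norm_mul, norm_mul, norm_fourier', norm_fourier', one_mul]
        linarith [norm_nonneg ((h : ∀ _ : V, ℂ) v)]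
      rw [Real.norm_eq_abs, abs_of_nonneg (Real.rpow_nonneg (norm_nonneg _) _)]
      exact Real.rpow_le_rpow (norm_nonneg _) hb ht.le
  have := key.rpow_const (p := ((2 : ℝ≥0∞).toReal)⁻¹) (Or.inr (by positivity))
  rw [Real.zero_rpow (by positivity)] at this
  refine this.congr fun n => ?_
  simp only [Function.comp_apply]
  rw [← Real.rpow_mul (norm_nonneg _), mul_inv_cancel₀ htne, Real.rpow_one]

open AddCircle in
lemma fourierCoeff_fourier' (m i : ℤ) :
    fourierCoeff (⇑(fourier m) : AddCircle (1:ℝ) → ℂ) i = if i = m then 1 else 0 := by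
  classical
  have h1 : fourierCoeff (⇑(fourierLp (T := (1:ℝ)) 2 m) : AddCircle (1:ℝ) → ℂ) i
      = fourierCoeff (⇑(fourier m) : AddCircle (1:ℝ) → ℂ) i := by
    unfold fourierCoeff
    apply integral_congr_ae
    filter_upwards [coeFn_fourierLp (T := (1:ℝ)) 2 m] with θ hθ
    rw [hθ]
  rw [← h1, ← fourierBasis_repr]
  have h2 : (fourierLp (T := (1:ℝ)) 2 m) = fourierBasis m :=
    (congrFun coe_fourierBasis m).symm
  rw [h2, fourierBasis.repr_self, lp.single_apply]
  by_cases h : i = m <;> simp [h]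

lemma mul_le_sq_add_sq (a b : ℝ≥0∞) : a * b ≤ a ^ (2:ℕ) + b ^ (2:ℕ) := by
  rcases le_total a b with h | h
  · calc a * b ≤ b * b := mul_le_mul' h le_rfl
    _ = b ^ (2:ℕ) := (sq b).symm
    _ ≤ a ^ (2:ℕ) + b ^ (2:ℕ) := le_add_self
  · calc a * b ≤ a * a := mul_le_mul' le_rfl h
    _ = a ^ (2:ℕ) := (sq a).symm
    _ ≤ a ^ (2:ℕ) + b ^ (2:ℕ) := le_self_add

lemma tsum_sq_eq (x : lp (fun _ : V => ℂ) 2) :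
    ∑' v : V, (‖x v‖₊ : ℝ≥0∞) ^ (2:ℕ) = (‖x‖₊ : ℝ≥0∞) ^ (2:ℕ) := by
  have ht : (0:ℝ) < (2 : ℝ≥0∞).toReal := by norm_num
  have hrp : ∀ a : ℝ, 0 ≤ a → a ^ (2 : ℝ≥0∞).toReal = a ^ (2:ℕ) := by
    intro a ha
    rw [show (2 : ℝ≥0∞).toReal = ((2:ℕ):ℝ) by norm_num, Real.rpow_natCast]
  have h1 : ‖x‖ ^ (2:ℕ) = ∑' v : V, ‖x v‖ ^ (2:ℕ) := by
    rw [← hrp _ (norm_nonneg x), lp.norm_rpow_eq_tsum ht x]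
    exact tsum_congr fun v => hrp _ (norm_nonneg _)
  have hsum : Summable fun v : V => ‖x v‖ ^ (2:ℕ) :=
    ((lp.memℓp x).summable ht).congr fun v => hrp _ (norm_nonneg _)
  have hsum' : Summable fun v : V => ‖x v‖₊ ^ (2:ℕ) := by
    rw [← NNReal.summable_coe]
    refine hsum.congr fun v => ?_
    push_cast
    rfl
  have key : (∑' v : V, ((‖x v‖₊ ^ (2:ℕ) : ℝ≥0) : ℝ≥0∞)) = ((‖x‖₊ ^ (2:ℕ) : ℝ≥0) : ℝ≥0∞) := by
    rw [← ENNReal.coe_tsum hsum']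
    congr 1
    apply NNReal.coe_injective
    rw [NNReal.coe_tsum]
    push_cast
    exact h1.symm
  calc ∑' v : V, (‖x v‖₊ : ℝ≥0∞) ^ (2:ℕ)
      = ∑' v : V, ((‖x v‖₊ ^ (2:ℕ) : ℝ≥0) : ℝ≥0∞) := tsum_congr fun v => by push_cast; rfl
    _ = ((‖x‖₊ ^ (2:ℕ) : ℝ≥0) : ℝ≥0∞) := key
    _ = (‖x‖₊ : ℝ≥0∞) ^ (2:ℕ) := by push_cast; rfl

open AddCircle in
lemma crux [Countable V] (T : DirTree V) (lam : V → ℝ)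
    (S : lp (fun _ : V => ℂ) 2 →L[ℂ] lp (fun _ : V => ℂ) 2) (hS : IsShift T lam S)
    (N : lp (fun _ : V => ℂ) 2 →L[ℂ] lp (fun _ : V => ℂ) 2) (φ : ℕ → ℂ)
    (hN : IsMultOp T lam φ N) (f g : lp (fun _ : V => ℂ) 2)
    (hfg : ∀ k : ℕ, (inner ℂ ((S ^ k) f) g : ℂ) = 0) :
    (inner ℂ (N f) g : ℂ) = 0 := by
  classical
  set c : AddCircle (1:ℝ) → ℂ :=
    fun θ => (inner ℂ (N (Umap T θ f)) (Umap T θ g) : ℂ) with hc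
  have termEq : ∀ (θ : AddCircle (1:ℝ)) (v : V),
      (starRingEnd ℂ) ((N (Umap T θ f)) v) * (Umap T θ g) v
        = ∑ j ∈ Finset.range (T.depth v + 1),
            ((starRingEnd ℂ) (φ j * ((S ^ j) f) v) * g v) * fourier (-(j:ℤ)) θ := by
    intro θ v
    rw [hN (Umap T θ f) v]
    unfold Gamma
    rw [map_sum, Finset.sum_mul]
    refine Finset.sum_congr rfl fun j hj => ?_
    rw [Finset.mem_range] at hj
    have hj' : j ≤ T.depth v := by omega
    have hdep : T.depth (T.par^[j] v) + j = T.depth v := depth_iter T j v hj'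
    rw [Umap_apply, Umap_apply, Spow T lam S hS j f v, if_pos hj']
    have e1 : (starRingEnd ℂ) (fourier (-(T.depth (T.par^[j] v) : ℤ)) θ)
        = fourier ((T.depth (T.par^[j] v) : ℤ)) θ := by
      rw [← fourier_neg (n := -(T.depth (T.par^[j] v) : ℤ)), neg_neg]
    have hfour : (starRingEnd ℂ) (fourier (-(T.depth (T.par^[j] v) : ℤ)) θ)
        * fourier (-(T.depth v : ℤ)) θ = fourier (-(j:ℤ)) θ := by
      have harith : (T.depth (T.par^[j] v) : ℤ) + -(T.depth v : ℤ) = -(j:ℤ) := by omega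
      rw [e1, ← fourier_add, harith]
    rw [← hfour]
    simp only [map_mul]
    ring
  have hcont : Continuous c :=
    Continuous.inner (N.continuous.comp (continuous_Umap T f)) (continuous_Umap T g)
  have hcsum : ∀ θ : AddCircle (1:ℝ),
      c θ = ∑' v : V, (starRingEnd ℂ) ((N (Umap T θ f)) v) * (Umap T θ g) v := by
    intro θ
    simp only [hc]
    rw [lp.inner_eq_tsum]
    exact tsum_congr fun v => by rw [RCLike.inner_apply, mul_comm]
  have hGcont : ∀ v : V, Continuous fun θ : AddCircle (1:ℝ) =>
      (starRingEnd ℂ) ((N (Umap T θ f)) v) * (Umap T θ g) v := by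
    intro v
    have he : (fun θ : AddCircle (1:ℝ) =>
        (starRingEnd ℂ) ((N (Umap T θ f)) v) * (Umap T θ g) v)
        = fun θ => ∑ j ∈ Finset.range (T.depth v + 1),
            ((starRingEnd ℂ) (φ j * ((S ^ j) f) v) * g v) * fourier (-(j:ℤ)) θ :=
      funext fun θ => termEq θ v
    rw [he]
    exact continuous_finset_sum _ fun j _ => continuous_const.mul (fourier _).continuous
  have hbound : ∀ θ : AddCircle (1:ℝ),
      (∑' v : V, (‖(starRingEnd ℂ) ((N (Umap T θ f)) v) * (Umap T θ g) v‖₊ : ℝ≥0∞))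
        ≤ ((‖N‖₊ : ℝ≥0∞) * (‖f‖₊ : ℝ≥0∞)) ^ (2:ℕ) + (‖g‖₊ : ℝ≥0∞) ^ (2:ℕ) := by
    intro θ
    have h1 : ∀ v : V, (‖(starRingEnd ℂ) ((N (Umap T θ f)) v) * (Umap T θ g) v‖₊ : ℝ≥0∞)
        ≤ (‖(N (Umap T θ f)) v‖₊ : ℝ≥0∞) ^ (2:ℕ) + (‖(Umap T θ g) v‖₊ : ℝ≥0∞) ^ (2:ℕ) := by
      intro v
      have : (‖(starRingEnd ℂ) ((N (Umap T θ f)) v) * (Umap T θ g) v‖₊ : ℝ≥0∞)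
          = (‖(N (Umap T θ f)) v‖₊ : ℝ≥0∞) * (‖(Umap T θ g) v‖₊ : ℝ≥0∞) := by
        rw [nnnorm_mul, RCLike.nnnorm_conj]
        push_cast
        rfl
      rw [this]
      exact mul_le_sq_add_sq _ _
    refine (ENNReal.tsum_le_tsum h1).trans ?_
    rw [ENNReal.tsum_add, tsum_sq_eq, tsum_sq_eq]
    have h2 : ‖N (Umap T θ f)‖₊ ≤ ‖N‖₊ * ‖f‖₊ := by
      refine (N.le_opNNNorm _).trans ?_
      have : ‖Umap T θ f‖₊ = ‖f‖₊ := NNReal.coe_injective (by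
        push_cast
        exact norm_Umap T θ f)
      rw [this]
    have h3 : ‖Umap T θ g‖₊ = ‖g‖₊ := NNReal.coe_injective (by
      push_cast
      exact norm_Umap T θ g)
    rw [h3]
    gcongr
    exact_mod_cast h2
  have hCne : (((‖N‖₊ : ℝ≥0∞) * (‖f‖₊ : ℝ≥0∞)) ^ (2:ℕ) + (‖g‖₊ : ℝ≥0∞) ^ (2:ℕ)) ≠ ∞ := by
    apply ENNReal.add_ne_top.2
    constructor
    · exact ENNReal.pow_ne_top (ENNReal.mul_ne_top ENNReal.coe_ne_top ENNReal.coe_ne_top)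
    · exact ENNReal.pow_ne_top ENNReal.coe_ne_top
  have hcoeff : ∀ i : ℤ, fourierCoeff c i = 0 := by
    intro i
    have hswap : fourierCoeff c i = ∑' v : V, fourierCoeff
        (fun θ => (starRingEnd ℂ) ((N (Umap T θ f)) v) * (Umap T θ g) v) i := by
      unfold fourierCoeff
      have he : (fun θ : AddCircle (1:ℝ) => fourier (-i) θ • c θ)
          = fun θ => ∑' v : V, fourier (-i) θ •
              ((starRingEnd ℂ) ((N (Umap T θ f)) v) * (Umap T θ g) v) := by
        funext θ
        rw [hcsum θ, smul_eq_mul, ← tsum_mul_left]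
        rfl
      rw [he]
      refine integral_tsum (fun v => ?_) ?_
      · exact (((fourier (-i) : C(AddCircle (1:ℝ), ℂ)).continuous).smul
          (hGcont v)).aestronglyMeasurable
      · have hnn : ∀ (v : V) (θ : AddCircle (1:ℝ)),
            (‖fourier (-i) θ • ((starRingEnd ℂ) ((N (Umap T θ f)) v) * (Umap T θ g) v)‖₊ : ℝ≥0∞)
            = (‖(starRingEnd ℂ) ((N (Umap T θ f)) v) * (Umap T θ g) v‖₊ : ℝ≥0∞) := by
          intro v θ
          rw [smul_eq_mul, nnnorm_mul]
          have : ‖fourier (-i) θ‖₊ = 1 := NNReal.coe_injective (by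
            push_cast
            exact norm_fourier' _ _)
          rw [this, one_mul]
        rw [← lintegral_tsum (fun v => (show Measurable fun θ : AddCircle (1:ℝ) =>
            ‖fourier (-i) θ • ((starRingEnd ℂ) ((N (Umap T θ f)) v) * (Umap T θ g) v)‖ₑ from
            ((((fourier (-i) :
            C(AddCircle (1:ℝ), ℂ)).continuous).smul (hGcont v)).measurable).enorm).aemeasurable)]
        · refine ne_top_of_le_ne_top hCne ?_
          calc ∫⁻ θ, ∑' v : V,
              (‖fourier (-i) θ • ((starRingEnd ℂ) ((N (Umap T θ f)) v) * (Umap T θ g) v)‖₊ : ℝ≥0∞)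
                ∂haarAddCircle
              ≤ ∫⁻ _, (((‖N‖₊ : ℝ≥0∞) * (‖f‖₊ : ℝ≥0∞)) ^ (2:ℕ) + (‖g‖₊ : ℝ≥0∞) ^ (2:ℕ))
                ∂haarAddCircle := by
                refine lintegral_mono fun θ => ?_
                exact le_trans (le_of_eq (tsum_congr fun v => hnn v θ)) (hbound θ)
            _ = ((‖N‖₊ : ℝ≥0∞) * (‖f‖₊ : ℝ≥0∞)) ^ (2:ℕ) + (‖g‖₊ : ℝ≥0∞) ^ (2:ℕ) := by
                rw [lintegral_const, measure_univ, mul_one]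
    have hterm : ∀ v : V, fourierCoeff
        (fun θ : AddCircle (1:ℝ) =>
          (starRingEnd ℂ) ((N (Umap T θ f)) v) * (Umap T θ g) v) i
        = if i ≤ 0 then
            (starRingEnd ℂ) (φ (-i).toNat * ((S ^ (-i).toNat) f) v) * g v
          else 0 := by
      intro v
      have he : (fun θ : AddCircle (1:ℝ) =>
          (starRingEnd ℂ) ((N (Umap T θ f)) v) * (Umap T θ g) v)
          = fun θ => ∑ j ∈ Finset.range (T.depth v + 1),
              ((starRingEnd ℂ) (φ j * ((S ^ j) f) v) * g v) * fourier (-(j:ℤ)) θ :=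
        funext fun θ => termEq θ v
      rw [he]
      have hint : ∀ j : ℕ, Integrable (fun θ : AddCircle (1:ℝ) => fourier (-i) θ •
          (((starRingEnd ℂ) (φ j * ((S ^ j) f) v) * g v) * fourier (-(j:ℤ)) θ))
          haarAddCircle := by
        intro j
        apply Continuous.integrable_of_hasCompactSupport
        · exact ((fourier _).continuous).smul (continuous_const.mul (fourier _).continuous)
        · exact IsClosed.isCompact (isClosed_tsupport _)
      have hsum : fourierCoeff (fun θ : AddCircle (1:ℝ) =>
          ∑ j ∈ Finset.range (T.depth v + 1),
            ((starRingEnd ℂ) (φ j * ((S ^ j) f) v) * g v) * fourier (-(j:ℤ)) θ) i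
          = ∑ j ∈ Finset.range (T.depth v + 1),
            ((starRingEnd ℂ) (φ j * ((S ^ j) f) v) * g v) *
              (if i = -(j:ℤ) then 1 else 0) := by
        unfold fourierCoeff
        have he2 : (fun θ : AddCircle (1:ℝ) => fourier (-i) θ •
            ∑ j ∈ Finset.range (T.depth v + 1),
              ((starRingEnd ℂ) (φ j * ((S ^ j) f) v) * g v) * fourier (-(j:ℤ)) θ)
            = fun θ => ∑ j ∈ Finset.range (T.depth v + 1), fourier (-i) θ •
              (((starRingEnd ℂ) (φ j * ((S ^ j) f) v) * g v) * fourier (-(j:ℤ)) θ) :=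
          funext fun θ => Finset.smul_sum
        rw [he2, integral_finset_sum _ fun j _ => hint j]
        refine Finset.sum_congr rfl fun j _ => ?_
        have he3 : (fun θ : AddCircle (1:ℝ) => fourier (-i) θ •
            (((starRingEnd ℂ) (φ j * ((S ^ j) f) v) * g v) * fourier (-(j:ℤ)) θ))
            = fun θ => ((starRingEnd ℂ) (φ j * ((S ^ j) f) v) * g v) •
              (fourier (-i) θ • fourier (-(j:ℤ)) θ) := by
          funext θ
          simp only [smul_eq_mul]
          ring
        rw [he3, integral_smul, ← fourierCoeff, fourierCoeff_fourier']
        rfl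
      rw [hsum]
      by_cases hi : i ≤ 0
      · rw [if_pos hi]
        have hik : ∀ j : ℕ, (i = -(j:ℤ)) ↔ (j = (-i).toNat) := by
          intro j
          omega
        have he4 : ∀ j ∈ Finset.range (T.depth v + 1),
            ((starRingEnd ℂ) (φ j * ((S ^ j) f) v) * g v) * (if i = -(j:ℤ) then 1 else 0)
            = if j = (-i).toNat then (starRingEnd ℂ) (φ j * ((S ^ j) f) v) * g v else 0 := by
          intro j _
          by_cases h : j = (-i).toNat
          · rw [if_pos ((hik j).2 h), if_pos h, mul_one]
          · rw [if_neg (fun hc => h ((hik j).1 hc)), if_neg h, mul_zero]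
        rw [Finset.sum_congr rfl he4, Finset.sum_ite_eq' (Finset.range (T.depth v + 1))]
        by_cases hk : (-i).toNat ∈ Finset.range (T.depth v + 1)
        · rw [if_pos hk]
        · rw [if_neg hk]
          rw [Finset.mem_range] at hk
          rw [Spow T lam S hS _ f v, if_neg (by omega)]
          simp
      · rw [if_neg hi]
        refine Finset.sum_eq_zero fun j _ => ?_
        rw [if_neg (by omega), mul_zero]
    rw [hswap, tsum_congr hterm]
    by_cases hi : i ≤ 0
    · simp only [if_pos hi]
      have he5 : ∀ v : V, (starRingEnd ℂ) (φ (-i).toNat * ((S ^ (-i).toNat) f) v) * g v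
          = (starRingEnd ℂ) (φ (-i).toNat) *
              ((starRingEnd ℂ) (((S ^ (-i).toNat) f) v) * g v) := by
        intro v
        rw [map_mul, mul_assoc]
      rw [tsum_congr he5, tsum_mul_left]
      have : (∑' v : V, (starRingEnd ℂ) (((S ^ (-i).toNat) f) v) * g v)
          = (inner ℂ ((S ^ (-i).toNat) f) g : ℂ) := by
        rw [lp.inner_eq_tsum]
        exact tsum_congr fun v => by rw [RCLike.inner_apply, mul_comm]
      rw [this, hfg, mul_zero]
    · simp only [if_neg hi, tsum_zero]
  let cM : C(AddCircle (1:ℝ), ℂ) := ⟨c, hcont⟩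
  have hLp : ContinuousMap.toLp (E := ℂ) 2 haarAddCircle ℂ cM = 0 := by
    apply fourierBasis.repr.injective
    rw [map_zero]
    apply lp.ext
    funext j
    rw [fourierBasis_repr]
    have he6 : fourierCoeff
        (⇑(ContinuousMap.toLp (E := ℂ) 2 haarAddCircle ℂ cM) : AddCircle (1:ℝ) → ℂ) j
        = fourierCoeff c j := by
      unfold fourierCoeff
      apply integral_congr_ae
      filter_upwards [ContinuousMap.coeFn_toLp (p := 2) haarAddCircle (𝕜 := ℂ) cM] with θ hθ
      rw [hθ]
      rfl
    rw [he6, hcoeff j]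
    simp [lp.coeFn_zero]
  have hcM : cM = 0 := ContinuousMap.toLp_injective (μ := haarAddCircle) (𝕜 := ℂ)
    (by rw [hLp, map_zero])
  have h0 : c 0 = 0 := by
    have := congrArg (fun F : C(AddCircle (1:ℝ), ℂ) => F 0) hcM
    exact this
  rw [hc] at h0
  simp only at h0
  rw [Umap_zero T f, Umap_zero T g] at h0
  exact h0

end Crux

end Stmt8Aux

/-- Proposition, second part: `Alg Lat ℳ(λ)` consists exactly of the
bounded operators `A` such that for all `f, g`: if `⟨M_φ f, g⟩ = 0` for every finitely
supported `φ ∈ 𝓜₀(λ)`, then `⟨A f, g⟩ = 0`. -/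
theorem stmt8 [Countable V] [Infinite V] (T : DirTree V) (hTl : T.Leafless)
    (lam : V → ℝ) (hlam : ∀ v, v ≠ T.root → 0 < lam v)
    (S : lp (fun _ : V => ℂ) 2 →L[ℂ] lp (fun _ : V => ℂ) 2) (hS : IsShift T lam S) :
    ∀ A : lp (fun _ : V => ℂ) 2 →L[ℂ] lp (fun _ : V => ℂ) 2,
      ((∀ K : Submodule ℂ (lp (fun _ : V => ℂ) 2),
          IsClosed (K : Set (lp (fun _ : V => ℂ) 2)) →
          (∀ φ : ℕ → ℂ, ∀ M : lp (fun _ : V => ℂ) 2 →L[ℂ] lp (fun _ : V => ℂ) 2,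
            IsMultOp T lam φ M → ∀ f ∈ K, M f ∈ K) →
          ∀ f ∈ K, A f ∈ K) ↔
        (∀ f g : lp (fun _ : V => ℂ) 2,
          (∀ φ : ℕ → ℂ, ∀ M : lp (fun _ : V => ℂ) 2 →L[ℂ] lp (fun _ : V => ℂ) 2,
            (Function.support φ).Finite → IsMultOp T lam φ M → (inner ℂ (M f) g : ℂ) = 0) →
          (inner ℂ (A f) g : ℂ) = 0)) := by
  intro A
  constructor
  · intro hA f g hfg
    let W : Submodule ℂ (lp (fun _ : V => ℂ) 2) :=
      { carrier := {h | ∀ k : ℕ, (inner ℂ ((S ^ k) h) g : ℂ) = 0}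
        add_mem' := fun ha hb k => by rw [map_add, inner_add_left, ha k, hb k, add_zero]
        zero_mem' := fun k => by rw [map_zero, inner_zero_left]
        smul_mem' := fun c x hx k => by rw [map_smul, inner_smul_left, hx k, mul_zero] }
    have hWclosed : IsClosed (W : Set (lp (fun _ : V => ℂ) 2)) := by
      have hset : (W : Set (lp (fun _ : V => ℂ) 2)) =
          ⋂ k : ℕ, (fun h : lp (fun _ : V => ℂ) 2 => (inner ℂ ((S ^ k) h) g : ℂ)) ⁻¹' {0} := by
        ext h
        simp only [SetLike.mem_coe, Set.mem_iInter, Set.mem_preimage, Set.mem_singleton_iff]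
        exact Iff.rfl
      rw [hset]
      exact isClosed_iInter fun k => IsClosed.preimage
        (Continuous.inner ((S ^ k).continuous) continuous_const) isClosed_singleton
    have hWinv : ∀ φ : ℕ → ℂ, ∀ M : lp (fun _ : V => ℂ) 2 →L[ℂ] lp (fun _ : V => ℂ) 2,
        IsMultOp T lam φ M → ∀ h ∈ W, M h ∈ W := by
      intro φ M hM h hh k
      have := Stmt8Aux.crux T lam S hS ((S ^ k).comp M) _
        (Stmt8Aux.isMultOp_comp_pow T lam S hS hM k) h g hh
      rwa [ContinuousLinearMap.comp_apply] at this
    have hfW : f ∈ W := by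
      intro k
      refine hfg (fun j => if j = k then 1 else 0) (S ^ k) ?_
        (Stmt8Aux.isMultOp_pow T lam S hS k)
      refine Set.Finite.subset (Set.finite_singleton k) fun j hj => ?_
      rw [Function.mem_support] at hj
      by_contra hjk
      simp only [Set.mem_singleton_iff] at hjk
      exact hj (if_neg hjk)
    have hAfW : A f ∈ W := hA W hWclosed hWinv f hfW
    have h0 := hAfW 0
    rwa [pow_zero, ContinuousLinearMap.one_apply] at h0
  · intro hA K hKclosed hKinv f hf
    haveI : CompleteSpace K := hKclosed.completeSpace_coe
    have hperp : ∀ g ∈ Kᗮ, (inner ℂ (A f) g : ℂ) = 0 := by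
      intro g hg
      exact hA f g fun φ M hφ hM =>
        (Submodule.mem_orthogonal K g).1 hg (M f) (hKinv φ M hM f hf)
    have hmem : A f ∈ Kᗮᗮ := by
      rw [Submodule.mem_orthogonal]
      intro u hu
      rw [← inner_conj_symm, hperp u hu, map_zero]
    rwa [Submodule.orthogonal_orthogonal] at hmem
end
end

section
/- If A ∈ Alg Lat ℳ(λ), then for every path 𝒫 = (V_𝒫, E_𝒫) of 𝒯 the subspace ℓ²(V_𝒫) (functions in ℓ²(V) vanishing off V_𝒫) is invariant under the adjoint A*. -/
open Filter Finset Classical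

set_option linter.unusedVariables false
open scoped ComplexConjugate ENNReal

noncomputable section
attribute [local instance] Classical.propDecidable

variable {V : Type*}

/-- `P` is (the vertex set of) a path in the tree: a subtree containing the root in which
every vertex has exactly one child. -/
def DirTree.IsPath (T : DirTree V) (P : Set V) : Prop :=
  T.root ∈ P ∧ (∀ v ∈ P, v ≠ T.root → T.par v ∈ P) ∧
    ∀ v ∈ P, ∃! u : V, u ∈ P ∧ u ≠ T.root ∧ T.par u = v

/-- Lemma (i): if `A ∈ Alg Lat ℳ(λ)`, then for every path `𝒫` the
subspace `ℓ²(V_𝒫)` is invariant under `A*`. -/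
theorem stmt9 [Countable V] [Infinite V] (T : DirTree V) (hTl : T.Leafless)
    (lam : V → ℝ) (hlam : ∀ v, v ≠ T.root → 0 < lam v)
    (S : lp (fun _ : V => ℂ) 2 →L[ℂ] lp (fun _ : V => ℂ) 2) (hS : IsShift T lam S)
    (A : lp (fun _ : V => ℂ) 2 →L[ℂ] lp (fun _ : V => ℂ) 2)
    (hA : ∀ K : Submodule ℂ (lp (fun _ : V => ℂ) 2),
      IsClosed (K : Set (lp (fun _ : V => ℂ) 2)) →
      (∀ φ : ℕ → ℂ, ∀ M : lp (fun _ : V => ℂ) 2 →L[ℂ] lp (fun _ : V => ℂ) 2,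
        IsMultOp T lam φ M → ∀ f ∈ K, M f ∈ K) →
      ∀ f ∈ K, A f ∈ K)
    (P : Set V) (hP : T.IsPath P) :
    ∀ f : lp (fun _ : V => ℂ) 2, (∀ v ∉ P, f v = 0) →
      ∀ v ∉ P, ContinuousLinearMap.adjoint A f v = 0 := by
  classical
  -- iterated parents stay in P
  have hiter : ∀ (k : ℕ) (v : V), v ∈ P → T.par^[k] v ∈ P := by
    intro k
    induction k with
    | zero => intro v hv; simpa using hv
    | succ n ih =>
      intro v hv
      rw [Function.iterate_succ_apply']
      have h := ih v hv
      by_cases hr : T.par^[n] v = T.root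
      · rw [hr, T.par_root]; exact hP.1
      · exact hP.2.1 _ h hr
  -- the closed invariant subspace K = {f : f = 0 on P}
  let K : Submodule ℂ (lp (fun _ : V => ℂ) 2) :=
    { carrier := {f | ∀ v ∈ P, f v = 0}
      add_mem' := by
        intro a b ha hb v hv
        have : (a + b : lp (fun _ : V => ℂ) 2) v = a v + b v := rfl
        rw [this, ha v hv, hb v hv, add_zero]
      zero_mem' := by intro v hv; rfl
      smul_mem' := by
        intro c a ha v hv
        have : (c • a : lp (fun _ : V => ℂ) 2) v = c * a v := rfl
        rw [this, ha v hv, mul_zero] }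
  have hKc : IsClosed (K : Set (lp (fun _ : V => ℂ) 2)) := by
    have : (K : Set (lp (fun _ : V => ℂ) 2)) = ⋂ v ∈ P, {f | f v = 0} := by
      ext f; simp [K, Set.mem_iInter]; exact Iff.rfl
    rw [this]
    refine isClosed_biInter fun v hv => ?_
    have hc : Continuous fun f : lp (fun _ : V => ℂ) 2 => f v := by
      let L : lp (fun _ : V => ℂ) 2 →ₗ[ℂ] ℂ :=
        { toFun := fun f : lp (fun _ : V => ℂ) 2 => f v
          map_add' := fun a b => rfl
          map_smul' := fun c a => rfl }
      refine (LinearMap.mkContinuous L 1 (fun f => ?_)).continuous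
      show ‖f v‖ ≤ 1 * ‖f‖; simpa using lp.norm_apply_le_norm (two_ne_zero) f v
    exact isClosed_eq hc continuous_const
  have hKinv : ∀ φ : ℕ → ℂ, ∀ M : lp (fun _ : V => ℂ) 2 →L[ℂ] lp (fun _ : V => ℂ) 2,
      IsMultOp T lam φ M → ∀ f ∈ K, M f ∈ K := by
    intro φ M hM f hf v hv
    rw [hM f v]
    unfold Gamma
    refine Finset.sum_eq_zero fun k _ => ?_
    rw [hf _ (hiter k v hv), mul_zero]
  have hAK : ∀ f ∈ K, A f ∈ K := hA K hKc hKinv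
  intro f hf v hv
  -- single v 1 ∈ K
  have hsingle : (lp.single 2 v (1 : ℂ) : lp (fun _ : V => ℂ) 2) ∈ K := by
    intro u hu
    rw [lp.single_apply]
    have : u ≠ v := fun h => hv (h ▸ hu)
    simp [this]
  have hAs := hAK _ hsingle
  have h1 : inner (𝕜 := ℂ) (lp.single 2 v (1 : ℂ)) (ContinuousLinearMap.adjoint A f)
      = (ContinuousLinearMap.adjoint A f) v := by
    rw [lp.inner_single_left]; simp [RCLike.inner_apply]
  rw [← h1, ContinuousLinearMap.adjoint_inner_right]
  have : (inner (𝕜 := ℂ) (A (lp.single 2 v (1 : ℂ))) f)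
      = ∑' u, inner (𝕜 := ℂ) ((A (lp.single 2 v (1 : ℂ))) u) (f u) :=
    lp.inner_eq_tsum _ _
  rw [this]
  have hz : ∀ u : V, inner (𝕜 := ℂ) ((A (lp.single 2 v (1 : ℂ))) u) (f u) = 0 := by
    intro u
    by_cases hu : u ∈ P
    · rw [hAs u hu]; simp
    · rw [hf u hu]; simp
  rw [tsum_congr hz, tsum_zero]
end
end
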